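/- arXiv:2307.09453 — 4 statements merged into one kernel-verified Lean document; each statement's English description precedes it below -/
import Mathlib

section
/- Let N ≥ 3 be odd and let (S,E) be the cycle of length N (S = Z/NZ with edges {i,i+1}). Then for every B in phi (i.e., every finite set B of elements of Cal_I^1 satisfying (P0) and (P1)), one has supp(B) ≠ S. -/
/-- The induced subgraph of `adj` on `I` is a path (type `A_m`, `m ≥ 1`):
there is an injective enumeration `f : Fin (m+1) → S` of `I` such that two
elements of `I` are adjacent iff they are consecutive in the enumeration. -/
def IsPathOn {S : Type} [DecidableEq S] (adj : S → S → Prop) (I : Finset S) : Prop :=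
  ∃ (m : ℕ) (f : Fin (m + 1) → S), Function.Injective f ∧
    I = Finset.image f Finset.univ ∧
    ∀ i j : Fin (m + 1), adj (f i) (f j) ↔ ((i : ℕ) + 1 = (j : ℕ) ∨ (j : ℕ) + 1 = (i : ℕ))

/-- The induced subgraph of `adj` on `I` is connected. -/
def ConnOn {S : Type} (adj : S → S → Prop) (I : Finset S) : Prop :=
  ∀ s ∈ I, ∀ t ∈ I, Relation.ReflTransGen (fun a b => a ∈ I ∧ b ∈ I ∧ adj a b) s t

/-- `I ∈ Cal_I^1`: the induced subgraph on `I` is a path and `|I|` is odd. -/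
def CalI1 {S : Type} [DecidableEq S] (adj : S → S → Prop) (I : Finset S) : Prop :=
  IsPathOn adj I ∧ Odd I.card

/-- `I ≺ I'`. -/
def Prec {S : Type} [DecidableEq S] (adj : S → S → Prop) (I I' : Finset S) : Prop :=
  I ⊂ I' ∧ ¬ ConnOn adj (I' \ I)

/-- `I ♠ I'`. -/
def Spade {S : Type} [DecidableEq S] (adj : S → S → Prop) (I I' : Finset S) : Prop :=
  I ∩ I' = ∅ ∧ ¬ ConnOn adj (I ∪ I')

/-- `I^{ev}`: the set of `s ∈ I` such that `I ∖ {s}` is the disjoint union of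
`I', I'' ∈ Cal_I^1` with `I' ♠ I''`. -/
def Iev {S : Type} [DecidableEq S] (adj : S → S → Prop) (I : Finset S) : Set S :=
  {s | s ∈ I ∧ ∃ I' I'' : Finset S, CalI1 adj I' ∧ CalI1 adj I'' ∧
    Spade adj I' I'' ∧ I.erase s = I' ∪ I''}

/-- Property (P0). -/
def P0 {S : Type} [DecidableEq S] (adj : S → S → Prop) (B : Finset (Finset S)) : Prop :=
  ∀ I ∈ B, ∀ I' ∈ B, I = I' ∨ Spade adj I I' ∨ Prec adj I I' ∨ Prec adj I' I

/-- Property (P1). -/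
def P1 {S : Type} [DecidableEq S] (adj : S → S → Prop) (B : Finset (Finset S)) : Prop :=
  ∀ I ∈ B, ∃ (k : ℕ) (f : Fin k → Finset S),
    (∀ j, f j ∈ B ∧ Prec adj (f j) I) ∧
    (∀ j j', j ≠ j' → Disjoint (f j) (f j')) ∧
    Iev adj I ⊆ ⋃ j, ((f j : Finset S) : Set S)

/-- `phi`: finite sets `B` of elements of `Cal_I^1` satisfying (P0) and (P1). -/
def phiSet {S : Type} [DecidableEq S] (adj : S → S → Prop) : Set (Finset (Finset S)) :=
  {B | (∀ I ∈ B, CalI1 adj I) ∧ P0 adj B ∧ P1 adj B}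

/-- `supp(B)`. -/
def suppB {S : Type} [DecidableEq S] (B : Finset (Finset S)) : Finset S := B.biUnion id

/-- `g_s(B)`. -/
def gs {S : Type} [DecidableEq S] (B : Finset (Finset S)) (s : S) : ℕ :=
  (B.filter (fun I => s ∈ I)).card

/-- `e_I = ∑_{s ∈ I} e_s`. -/
def eSum {S : Type} {V : Type} [AddCommGroup V] [Module (ZMod 2) V]
    (e : S → V) (I : Finset S) : V := ∑ s ∈ I, e s

/-- `L_B`: the `F`-span of `{e_I : I ∈ B}`. -/
def LB {S : Type} {V : Type} [AddCommGroup V] [Module (ZMod 2) V]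
    (e : S → V) (B : Finset (Finset S)) : Submodule (ZMod 2) V :=
  Submodule.span (ZMod 2) ((fun I => eSum e I) '' (B : Set (Finset S)))

/-- `eps(B) = ∑_{s ∈ S} ((g_s(B)(g_s(B)+1)/2) mod 2) e_s`. -/
def epsB {S : Type} [DecidableEq S] [Fintype S] {V : Type} [AddCommGroup V]
    [Module (ZMod 2) V] (e : S → V) (B : Finset (Finset S)) : V :=
  ∑ s : S, ((gs B s * (gs B s + 1) / 2 : ℕ) : ZMod 2) • e s

/-- The triple `(V, <,>, e)` (with graph `adj`) is perfect. -/
def IsPerfect {S : Type} [DecidableEq S] [Fintype S] {V : Type} [AddCommGroup V]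
    [Module (ZMod 2) V] (adj : S → S → Prop) (e : S → V) : Prop :=
  (∀ B ∈ phiSet adj,
      (LinearIndependent (ZMod 2) (fun I : {I : Finset S // I ∈ B} => eSum e I.1)) ∧
      (∀ I : Finset S, CalI1 adj I → (eSum e I ∈ LB e B ↔ I ∈ B))) ∧
  (∀ B ∈ phiSet adj, epsB e B ∈ LB e B) ∧
  Set.BijOn (epsB e) (phiSet adj) (⋃ B ∈ phiSet adj, ((LB e B : Submodule (ZMod 2) V) : Set V)) ∧
  (∀ B ∈ phiSet adj, ∀ B' ∈ phiSet adj, epsB e B' ∈ LB e B → ∀ s : S, gs B' s ≤ gs B s)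
/-- Adjacency of the cycle of length `N` on `S = ZMod N`. -/
def cadj (N : ℕ) (i j : ZMod N) : Prop := j = i + 1 ∨ i = j + 1

/-- `V = F^S` for `S = ZMod N`. -/
abbrev Vc (N : ℕ) := ZMod N → ZMod 2

/-- The standard basis vector `e_s`. -/
def eVec (N : ℕ) (s : ZMod N) : Vc N := Pi.single s 1

/-- The line `F·e_S`, where `e_S = ∑_{s ∈ S} e_s`. -/
def radN (N : ℕ) [NeZero N] : Submodule (ZMod 2) (Vc N) :=
  Submodule.span (ZMod 2) {eSum (eVec N) Finset.univ}

/-- `Vbar = V / (F·e_S)`. -/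
abbrev VbarN (N : ℕ) [NeZero N] := Vc N ⧸ radN N

/-- The quotient map `pi : V → Vbar`. -/
def piQ (N : ℕ) [NeZero N] : Vc N →ₗ[ZMod 2] VbarN N := (radN N).mkQ

/-- `ebar_s = pi(e_s)`. -/
def ebar (N : ℕ) [NeZero N] (s : ZMod N) : VbarN N := piQ N (eVec N s)
open scoped Classical in
/-- The connected component of `s` in the induced subgraph of `adj` on `I`. -/
noncomputable def compOf {S : Type} [DecidableEq S] (adj : S → S → Prop)
    (I : Finset S) (s : S) : Finset S :=
  I.filter (fun t => Relation.ReflTransGen (fun a b => a ∈ I ∧ b ∈ I ∧ adj a b) s t)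

/-- `c(I)`: the set of vertex sets of connected components of the induced subgraph on `I`. -/
noncomputable def comps {S : Type} [DecidableEq S] (adj : S → S → Prop)
    (I : Finset S) : Finset (Finset S) :=
  I.image (compOf adj I)

/-- `|c^0(I)|`: the number of connected components of even cardinality. -/
noncomputable def c0card {S : Type} [DecidableEq S] (adj : S → S → Prop)
    (I : Finset S) : ℕ :=
  ((comps adj I).filter (fun C => Even C.card)).card

/-- `V_0 = {e_I : I ⊊ S with |c^0(I)| even}`. -/
def V0set (N : ℕ) [NeZero N] : Set (Vc N) :=
  {v | ∃ I : Finset (ZMod N), I ≠ Finset.univ ∧ Even (c0card (cadj N) I) ∧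
    v = eSum (eVec N) I}

/-- `V_1 = {e_S} ∪ {e_I : ∅ ≠ I ⊊ S with |c^0(I)| odd}`. -/
def V1set (N : ℕ) [NeZero N] : Set (Vc N) :=
  {v | v = eSum (eVec N) Finset.univ ∨ ∃ I : Finset (ZMod N), I ≠ ∅ ∧ I ≠ Finset.univ ∧
    Odd (c0card (cadj N) I) ∧ v = eSum (eVec N) I}
open scoped Classical in
/-- `I^{odd} = I ∖ I^{ev}` (as a `Finset`). -/
noncomputable def IoddF {S : Type} [DecidableEq S] (adj : S → S → Prop)
    (I : Finset S) : Finset S :=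
  I.filter (fun s => s ∉ Iev adj I)

/-- `n_B = |{I ∈ B : ee ⊆ I}|`. -/
def nB {S : Type} [DecidableEq S] (ee : Finset S) (B : Finset (Finset S)) : ℕ :=
  (B.filter (fun I => ee ⊆ I)).card

open scoped Classical in
/-- `B ↦ B^!`: remove the unique `I_B ∈ B` with `|I_B ∩ ee| = 1` when `n_B` is odd;
leave `B` unchanged when `n_B` is even. -/
noncomputable def bangF {S : Type} [DecidableEq S] (ee : Finset S)
    (B : Finset (Finset S)) : Finset (Finset S) :=
  if h : Odd (nB ee B) ∧ ∃ I ∈ B, (I ∩ ee).card = 1 then B.erase h.2.choose else B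

/-- `omega = {B^! : B ∈ phi}`. -/
def omegaSet {S : Type} [DecidableEq S] (adj : S → S → Prop) (ee : Finset S) :
    Set (Finset (Finset S)) :=
  (bangF ee) '' (phiSet adj)

open scoped Classical in
/-- `Btilde`: the unique element of `phi` with `Btilde^! = B`. -/
noncomputable def tildeF {S : Type} [DecidableEq S] (adj : S → S → Prop) (ee : Finset S)
    (C : Finset (Finset S)) : Finset (Finset S) :=
  if h : ∃ B ∈ phiSet adj, bangF ee B = C then h.choose else ∅

/-- `'eps(B) = eps(Btilde)`. -/
noncomputable def epsO {S : Type} [DecidableEq S] [Fintype S] {V : Type} [AddCommGroup V]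
    [Module (ZMod 2) V] (adj : S → S → Prop) (ee : Finset S) (e : S → V)
    (C : Finset (Finset S)) : V :=
  epsB e (tildeF adj ee C)

/-- `B' ⪯ B` on `omega`. -/
def preceqO {S : Type} [DecidableEq S] [Fintype S] {V : Type} [AddCommGroup V]
    [Module (ZMod 2) V] (adj : S → S → Prop) (ee : Finset S) (e : S → V)
    (B' B : Finset (Finset S)) : Prop :=
  ∃ (k : ℕ) (c : ℕ → Finset (Finset S)), c 0 = B' ∧ c k = B ∧
    (∀ i ≤ k, c i ∈ omegaSet adj ee) ∧
    (∀ i < k, epsO adj ee e (c i) ∈ LB e (c (i + 1)))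

/-- The linear form `v ↦ v t + v t'` on `V`. -/
def zeeV (N : ℕ) (t t' : ZMod N) : Vc N →ₗ[ZMod 2] ZMod 2 :=
  (LinearMap.proj t : Vc N →ₗ[ZMod 2] ZMod 2) + (LinearMap.proj t' : Vc N →ₗ[ZMod 2] ZMod 2)

/-- `z_ee : Vbar → F`, the linear map with `z_ee(ebar_s) = 1` iff `s ∈ ee = {t,t'}`. -/
noncomputable def zee (N : ℕ) [NeZero N] (t t' : ZMod N) : VbarN N →ₗ[ZMod 2] ZMod 2 :=
  Submodule.liftQ (radN N) (zeeV N t t') (by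
    rw [radN, Submodule.span_le, Set.singleton_subset_iff]
    have h1 : ∀ u : ZMod N, (eSum (eVec N) Finset.univ) u = 1 := by
      intro u
      simp [eSum, eVec, Finset.sum_apply, Finset.sum_pi_single]
    simp only [SetLike.mem_coe, LinearMap.mem_ker, zeeV, LinearMap.add_apply,
      LinearMap.proj_apply, h1]
    decide)
/-- The maximal elements of a finite family of finsets, under inclusion. -/
def maxElts {S : Type} [DecidableEq S] (C : Finset (Finset S)) : Finset (Finset S) :=
  C.filter (fun I => ∀ I' ∈ C, ¬ I ⊂ I')

/-- `restB B k = B ∖ (B_1 ∪ … ∪ B_k)`: what remains of `B` after removing the first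
`k` layers; the `k`-th layer (`k ≥ 1`) is `B_k = maxElts (restB B (k-1))`. -/
def restB {S : Type} [DecidableEq S] (B : Finset (Finset S)) : ℕ → Finset (Finset S)
  | 0 => B
  | k + 1 => restB B k \ maxElts (restB B k)

/-- The relation `B' ≤ B` on `phi(V)`. -/
def lePhi {S : Type} [DecidableEq S] [Fintype S] {V : Type} [AddCommGroup V]
    [Module (ZMod 2) V] (adj : S → S → Prop) (e : S → V)
    (B' B : Finset (Finset S)) : Prop :=
  ∃ (k : ℕ) (c : ℕ → Finset (Finset S)), c 0 = B' ∧ c k = B ∧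
    (∀ i ≤ k, c i ∈ phiSet adj) ∧
    (∀ i < k, epsB e (c i) ∈ LB e (c (i + 1)))

lemma connOn_of_isPathOn {S : Type} [DecidableEq S] {adj : S → S → Prop}
    {I : Finset S} (h : IsPathOn adj I) : ConnOn adj I := by
  obtain ⟨m, f, hinj, hI, hadj⟩ := h
  set r := fun a b => a ∈ I ∧ b ∈ I ∧ adj a b with hr
  have hmem : ∀ i : Fin (m+1), f i ∈ I := by
    intro i; rw [hI]; exact Finset.mem_image_of_mem f (Finset.mem_univ i)
  have fwd : ∀ n (hn : n < m + 1),
      Relation.ReflTransGen r (f ⟨0, Nat.succ_pos m⟩) (f ⟨n, hn⟩) := by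
    intro n
    induction n with
    | zero => intro hn; exact Relation.ReflTransGen.refl
    | succ k ih =>
      intro hn
      have hk : k < m + 1 := Nat.lt_of_succ_lt hn
      exact (ih hk).tail ⟨hmem _, hmem _, (hadj ⟨k, hk⟩ ⟨k+1, hn⟩).2 (Or.inl rfl)⟩
  have bwd : ∀ n (hn : n < m + 1),
      Relation.ReflTransGen r (f ⟨n, hn⟩) (f ⟨0, Nat.succ_pos m⟩) := by
    intro n
    induction n with
    | zero => intro hn; exact Relation.ReflTransGen.refl
    | succ k ih =>
      intro hn
      have hk : k < m + 1 := Nat.lt_of_succ_lt hn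
      exact Relation.ReflTransGen.head
        ⟨hmem _, hmem _, (hadj ⟨k+1, hn⟩ ⟨k, hk⟩).2 (Or.inr rfl)⟩ (ih hk)
  intro s hs t ht
  rw [hI] at hs ht
  obtain ⟨i, -, rfl⟩ := Finset.mem_image.1 hs
  obtain ⟨j, -, rfl⟩ := Finset.mem_image.1 ht
  exact (bwd i.1 i.2).trans (fwd j.1 j.2)

lemma exists_boundary (N : ℕ) [NeZero N] (I : Finset (ZMod N)) (hne : I.Nonempty)
    (hproper : I ≠ Finset.univ) : ∃ t ∈ I, t + 1 ∉ I := by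
  by_contra h
  push_neg at h
  obtain ⟨t0, ht0⟩ := hne
  have hall : ∀ k : ℕ, t0 + (k : ZMod N) ∈ I := by
    intro k
    induction k with
    | zero => simpa using ht0
    | succ k ih =>
      have : t0 + ((k + 1 : ℕ) : ZMod N) = (t0 + (k : ZMod N)) + 1 := by
        push_cast; ring
      rw [this]
      exact h _ ih
  apply hproper
  ext x
  simp only [Finset.mem_univ, iff_true]
  have hx := hall (x - t0).val
  have : t0 + ((x - t0).val : ZMod N) = x := by
    rw [ZMod.natCast_val, ZMod.cast_id]; ring
  rwa [this] at hx

lemma not_calI1_univ (N : ℕ) [NeZero N] (hN : 3 ≤ N) :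
    ¬ CalI1 (cadj N) (Finset.univ : Finset (ZMod N)) := by
  rintro ⟨⟨m, f, hinj, hI, hadj⟩, -⟩
  have hsurj : ∀ x : ZMod N, ∃ i, f i = x := by
    intro x
    have hx : x ∈ Finset.image f Finset.univ := hI ▸ Finset.mem_univ x
    obtain ⟨i, -, hi⟩ := Finset.mem_image.1 hx
    exact ⟨i, hi⟩
  set x := f 0 with hx
  obtain ⟨j, hj⟩ := hsurj (x + 1)
  obtain ⟨j', hj'⟩ := hsurj (x - 1)
  have h1 : cadj N x (f j) := by rw [hj]; exact Or.inl rfl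
  have h2 : cadj N x (f j') := by rw [hj']; exact Or.inr (by ring)
  have hj1 : (j : ℕ) = 1 := by
    have := (hadj 0 j).1 h1
    simp only [Fin.val_zero] at this
    omega
  have hj'1 : (j' : ℕ) = 1 := by
    have := (hadj 0 j').1 h2
    simp only [Fin.val_zero] at this
    omega
  have hjj : j = j' := Fin.ext (by omega)
  have hxx : x + 1 = x - 1 := by rw [← hj, hjj, hj']
  have h20 : ((2 : ℕ) : ZMod N) = 0 := by push_cast; linear_combination hxx
  have h2dvd : N ∣ 2 := (ZMod.natCast_eq_zero_iff 2 N).1 h20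
  have := Nat.le_of_dvd (by norm_num) h2dvd
  omega

/-- on the cycle of length `N`, every `B ∈ phi` has `supp(B) ≠ S`. -/
theorem statement4 (N : ℕ) [NeZero N] (hN : 3 ≤ N) (hodd : Odd N)
    (B : Finset (Finset (ZMod N))) (hB : B ∈ phiSet (cadj N)) :
    suppB B ≠ Finset.univ := by
  intro hsupp
  obtain ⟨hBI, hP0, -⟩ := hB
  have hne : B.Nonempty := by
    by_contra h
    rw [Finset.not_nonempty_iff_eq_empty] at h
    rw [h] at hsupp
    simp only [suppB, Finset.biUnion_empty] at hsupp
    exact Finset.univ_nonempty.ne_empty hsupp.symm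
  obtain ⟨I, hIB, hmax⟩ := Finset.exists_max_image B Finset.card hne
  have hIcal := hBI I hIB
  have hInot : I ≠ Finset.univ := fun h => not_calI1_univ N hN (h ▸ hIcal)
  have hIne : I.Nonempty := Finset.card_pos.1 hIcal.2.pos
  obtain ⟨t, htI, hts⟩ := exists_boundary N I hIne hInot
  have hsmem : t + 1 ∈ suppB B := hsupp ▸ Finset.mem_univ _
  obtain ⟨I', hI'B, hsI'⟩ := Finset.mem_biUnion.1 hsmem
  simp only [id] at hsI'
  have hne' : I ≠ I' := fun h => hts (h ▸ hsI')
  rcases hP0 I hIB I' hI'B with h | h | h | h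
  · exact hne' h
  · -- Spade: contradiction with connectedness of I ∪ I'
    obtain ⟨-, hconn⟩ := h
    apply hconn
    set r := fun a b => a ∈ I ∪ I' ∧ b ∈ I ∪ I' ∧ cadj N a b with hr
    have hcI := connOn_of_isPathOn hIcal.1
    have hcI' := connOn_of_isPathOn (hBI I' hI'B).1
    have liftI : ∀ a ∈ I, ∀ b ∈ I, Relation.ReflTransGen r a b := by
      intro a ha b hb
      exact Relation.ReflTransGen.mono (fun x y ⟨h1, h2, h3⟩ =>
        ⟨Finset.mem_union_left _ h1, Finset.mem_union_left _ h2, h3⟩) _ _ (hcI a ha b hb)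
    have liftI' : ∀ a ∈ I', ∀ b ∈ I', Relation.ReflTransGen r a b := by
      intro a ha b hb
      exact Relation.ReflTransGen.mono (fun x y ⟨h1, h2, h3⟩ =>
        ⟨Finset.mem_union_right _ h1, Finset.mem_union_right _ h2, h3⟩) _ _ (hcI' a ha b hb)
    have bridge : r t (t + 1) :=
      ⟨Finset.mem_union_left _ htI, Finset.mem_union_right _ hsI', Or.inl rfl⟩
    have bridge' : r (t + 1) t :=
      ⟨Finset.mem_union_right _ hsI', Finset.mem_union_left _ htI, Or.inr rfl⟩
    intro a ha b hb
    rcases Finset.mem_union.1 ha with ha' | ha' <;>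
      rcases Finset.mem_union.1 hb with hb' | hb'
    · exact liftI a ha' b hb'
    · exact ((liftI a ha' t htI).tail bridge).trans (liftI' (t + 1) hsI' b hb')
    · exact ((liftI' a ha' (t + 1) hsI').tail bridge').trans (liftI t htI b hb')
    · exact liftI' a ha' b hb'
  · exact absurd (hmax I' hI'B) (not_le.2 (Finset.card_lt_card h.1))
  · exact hts (h.1.1 hsI')
end

section
/- Let N ≥ 3 be odd and let (S,E) be the cycle of length N. For every I ⊆ S with ∅ ≠ I ⊊ S, the number |c^0(I)| + |c^0(S∖I)| is odd. Consequently e_I lies in V_0 if and only if e_{S∖I} lies in V_1, and the map x ↦ x + e_S is a bijection from V_0 onto V_1. -/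
section S5Aux

open Relation Finset
open scoped Classical

lemma odd_iff_cast (n : ℕ) : Odd n ↔ (n : ZMod 2) = 1 := by
  rw [Nat.odd_iff, ← ZMod.natCast_mod n 2]
  rcases Nat.mod_two_eq_zero_or_one n with h | h <;> rw [h] <;> decide

set_option linter.unusedSectionVars false

variable {N : ℕ} [NeZero N]

lemma rel_symm (I : Finset (ZMod N)) :
    Symmetric (fun a b => a ∈ I ∧ b ∈ I ∧ cadj N a b) :=
  fun _ _ h => ⟨h.2.1, h.1, Or.symm h.2.2⟩

lemma rtg_symm {I : Finset (ZMod N)} {s t : ZMod N}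
    (h : Relation.ReflTransGen (fun a b => a ∈ I ∧ b ∈ I ∧ cadj N a b) s t) :
    Relation.ReflTransGen (fun a b => a ∈ I ∧ b ∈ I ∧ cadj N a b) t s :=
  by
    induction h with
    | refl => exact Relation.ReflTransGen.refl
    | tail _ hbc ih => exact Relation.ReflTransGen.head (rel_symm I hbc) ih

lemma mem_compOf {I : Finset (ZMod N)} {s t : ZMod N} :
    t ∈ compOf (cadj N) I s ↔ t ∈ I ∧
      Relation.ReflTransGen (fun a b => a ∈ I ∧ b ∈ I ∧ cadj N a b) s t := by
  simp [compOf, Finset.mem_filter]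

lemma compOf_subset (I : Finset (ZMod N)) (s : ZMod N) :
    compOf (cadj N) I s ⊆ I := Finset.filter_subset _ _

lemma mem_compOf_self {I : Finset (ZMod N)} {s : ZMod N} (hs : s ∈ I) :
    s ∈ compOf (cadj N) I s := mem_compOf.mpr ⟨hs, Relation.ReflTransGen.refl⟩

lemma compOf_eq {I : Finset (ZMod N)} {s t : ZMod N}
    (h : Relation.ReflTransGen (fun a b => a ∈ I ∧ b ∈ I ∧ cadj N a b) s t) :
    compOf (cadj N) I s = compOf (cadj N) I t := by
  ext x
  rw [mem_compOf, mem_compOf]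
  constructor
  · rintro ⟨hx, hsx⟩; exact ⟨hx, Relation.ReflTransGen.trans (rtg_symm h) hsx⟩
  · rintro ⟨hx, htx⟩; exact ⟨hx, Relation.ReflTransGen.trans h htx⟩

lemma biUnion_comps (I : Finset (ZMod N)) :
    (comps (cadj N) I).biUnion id = I := by
  ext x
  simp only [Finset.mem_biUnion, comps, Finset.mem_image, id]
  constructor
  · rintro ⟨C, ⟨s, _, rfl⟩, hx⟩; exact compOf_subset I s hx
  · intro hx; exact ⟨compOf (cadj N) I x, ⟨x, hx, rfl⟩, mem_compOf_self hx⟩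

lemma comps_disj (I : Finset (ZMod N)) :
    ∀ C ∈ comps (cadj N) I, ∀ D ∈ comps (cadj N) I, C ≠ D → Disjoint C D := by
  intro C hC D hD hne
  rw [Finset.disjoint_left]
  intro x hxC hxD
  apply hne
  simp only [comps, Finset.mem_image] at hC hD
  obtain ⟨s, _, rfl⟩ := hC
  obtain ⟨t, _, rfl⟩ := hD
  rw [compOf_eq (mem_compOf.mp hxC).2, ← compOf_eq (mem_compOf.mp hxD).2]

lemma sum_card_comps (I : Finset (ZMod N)) :
    ∑ C ∈ comps (cadj N) I, C.card = I.card := by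
  conv_rhs => rw [← biUnion_comps I]
  exact (Finset.card_biUnion (comps_disj I)).symm

lemma c0card_cast (I : Finset (ZMod N)) :
    (c0card (cadj N) I : ZMod 2) =
      ((comps (cadj N) I).card : ZMod 2) + (I.card : ZMod 2) := by
  have h1 : c0card (cadj N) I +
      ((comps (cadj N) I).filter (fun C => ¬ Even C.card)).card =
      (comps (cadj N) I).card := by
    rw [c0card]
    exact Finset.card_filter_add_card_filter_not _
  have h2 : (I.card : ZMod 2) =
      (((comps (cadj N) I).filter (fun C => ¬ Even C.card)).card : ZMod 2) := by
    rw [← sum_card_comps I, Nat.cast_sum,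
      ← Finset.sum_filter_add_sum_filter_not (comps (cadj N) I) (fun C => Even C.card)]
    have e1 : ∑ C ∈ (comps (cadj N) I).filter (fun C => Even C.card),
        ((C.card : ℕ) : ZMod 2) = 0 := by
      apply Finset.sum_eq_zero
      intro C hC
      have hE : Even C.card := (Finset.mem_filter.mp hC).2
      rw [← ZMod.natCast_mod, Nat.even_iff.mp hE, Nat.cast_zero]
    have e2 : ∑ C ∈ (comps (cadj N) I).filter (fun C => ¬ Even C.card),
        ((C.card : ℕ) : ZMod 2) =
        (((comps (cadj N) I).filter (fun C => ¬ Even C.card)).card : ZMod 2) := by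
      rw [Finset.card_eq_sum_ones, Nat.cast_sum]
      apply Finset.sum_congr rfl
      intro C hC
      have hO : Odd C.card := Nat.not_even_iff_odd.mp (Finset.mem_filter.mp hC).2
      rw [(odd_iff_cast _).mp hO]; simp
    rw [e1, e2, zero_add]
  have hc : (c0card (cadj N) I : ZMod 2) +
      (((comps (cadj N) I).filter (fun C => ¬ Even C.card)).card : ZMod 2) =
      ((comps (cadj N) I).card : ZMod 2) := by exact_mod_cast congrArg (Nat.cast (R := ZMod 2)) h1
  have h22 : ∀ a : ZMod 2, a + a = 0 := by decide
  calc (c0card (cadj N) I : ZMod 2)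
      = (c0card (cadj N) I : ZMod 2) +
        ((((comps (cadj N) I).filter (fun C => ¬ Even C.card)).card : ZMod 2) +
         (((comps (cadj N) I).filter (fun C => ¬ Even C.card)).card : ZMod 2)) := by
        rw [h22, add_zero]
    _ = ((comps (cadj N) I).card : ZMod 2) +
        (((comps (cadj N) I).filter (fun C => ¬ Even C.card)).card : ZMod 2) := by
        rw [← add_assoc, hc]
    _ = _ := by rw [← h2]

lemma exists_not_mem {I : Finset (ZMod N)} (hI : I ≠ Finset.univ) : ∃ u, u ∉ I := by
  by_contra h
  push_neg at h
  exact hI (Finset.eq_univ_iff_forall.mpr h)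

lemma cast_val_eq (a : ZMod N) : ((a.val : ℕ) : ZMod N) = a := by
  rw [ZMod.natCast_val, ZMod.cast_id]

lemma exists_endpoint {I : Finset (ZMod N)} (hI : I ≠ Finset.univ) {s : ZMod N}
    (hs : s ∈ I) : ∃ a, a ∈ compOf (cadj N) I s ∧ a + 1 ∉ I := by
  obtain ⟨u, hu⟩ := exists_not_mem hI
  have hP : ∃ j : ℕ, s + (((j + 1 : ℕ)) : ZMod N) ∉ I := by
    refine ⟨(u - s).val - 1, ?_⟩
    have hvne : (u - s).val ≠ 0 := by
      intro h0
      rw [ZMod.val_eq_zero, sub_eq_zero] at h0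
      exact hu (h0 ▸ hs)
    have hstep : (u - s).val - 1 + 1 = (u - s).val := Nat.succ_pred_eq_of_pos (Nat.pos_of_ne_zero hvne)
    rw [hstep, cast_val_eq, add_sub_cancel]
    exact hu
  set k := Nat.find hP with hkdef
  have hk1 : s + (((k + 1 : ℕ)) : ZMod N) ∉ I := Nat.find_spec hP
  have hk2 : ∀ j : ℕ, j ≤ k → s + ((j : ℕ) : ZMod N) ∈ I := by
    intro j hj
    cases j with
    | zero => simpa using hs
    | succ j' =>
      have := Nat.find_min hP (show j' < k from by omega)
      simpa using this
  have chain : ∀ j : ℕ, j ≤ k → Relation.ReflTransGen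
      (fun a b => a ∈ I ∧ b ∈ I ∧ cadj N a b) s (s + ((j : ℕ) : ZMod N)) := by
    intro j
    induction j with
    | zero => intro _; simpa using Relation.ReflTransGen.refl
    | succ j ih =>
      intro hj
      refine (ih (by omega)).tail ?_
      refine ⟨hk2 j (by omega), hk2 (j + 1) hj, Or.inl ?_⟩
      push_cast
      ring
  refine ⟨s + ((k : ℕ) : ZMod N), mem_compOf.mpr ⟨hk2 k le_rfl, chain k le_rfl⟩, ?_⟩
  have : s + ((k : ℕ) : ZMod N) + 1 = s + (((k + 1 : ℕ)) : ZMod N) := by push_cast; ring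
  rw [this]
  exact hk1

lemma endpoint_unique {I : Finset (ZMod N)} (hI : I ≠ Finset.univ) {a b : ZMod N}
    (ha : a ∈ I) (ha1 : a + 1 ∉ I) (hb : b ∈ compOf (cadj N) I a) (hb1 : b + 1 ∉ I) :
    b = a := by
  obtain ⟨u, hu⟩ := exists_not_mem hI
  have hP : ∃ j : ℕ, a - (((j + 1 : ℕ)) : ZMod N) ∉ I := by
    refine ⟨(a - u).val - 1, ?_⟩
    have hvne : (a - u).val ≠ 0 := by
      intro h0
      rw [ZMod.val_eq_zero, sub_eq_zero] at h0
      exact hu (h0 ▸ ha)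
    have hstep : (a - u).val - 1 + 1 = (a - u).val := Nat.succ_pred_eq_of_pos (Nat.pos_of_ne_zero hvne)
    rw [hstep, cast_val_eq, sub_sub_cancel]
    exact hu
  set r := Nat.find hP with hrdef
  have hr1 : a - (((r + 1 : ℕ)) : ZMod N) ∉ I := Nat.find_spec hP
  have hr2 : ∀ j : ℕ, j ≤ r → a - ((j : ℕ) : ZMod N) ∈ I := by
    intro j hj
    cases j with
    | zero => simpa using ha
    | succ j' =>
      have := Nat.find_min hP (show j' < r from by omega)
      simpa using this
  have hQ : ∀ t, Relation.ReflTransGen (fun x y => x ∈ I ∧ y ∈ I ∧ cadj N x y) a t →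
      ∃ j : ℕ, j ≤ r ∧ t = a - ((j : ℕ) : ZMod N) := by
    intro t ht
    induction ht with
    | refl => exact ⟨0, Nat.zero_le _, by simp⟩
    | @tail x y h1 h2 ih =>
      obtain ⟨j, hj, rfl⟩ := ih
      obtain ⟨hx, hy, hc⟩ := h2
      rcases hc with h | h
      · -- next = (a - j) + 1
        cases j with
        | zero =>
          exfalso
          apply ha1
          have : a - ((0 : ℕ) : ZMod N) + 1 = a + 1 := by push_cast; ring
          rw [h, this] at hy
          exact hy
        | succ j' =>
          refine ⟨j', by omega, ?_⟩
          rw [h]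
          push_cast
          ring
      · -- a - j = next + 1
        have hy' : y = a - (((j + 1 : ℕ)) : ZMod N) := by
          have hyv := eq_sub_of_add_eq h.symm
          rw [hyv]
          push_cast
          ring
        by_cases hjr : j + 1 ≤ r
        · exact ⟨j + 1, hjr, hy'⟩
        · exfalso
          have hjreq : j = r := by omega
          subst hjreq
          exact hr1 (hy' ▸ hy)
  obtain ⟨hbI, hab⟩ := mem_compOf.mp hb
  obtain ⟨j, hj, rfl⟩ := hQ b hab
  cases j with
  | zero => simp
  | succ j' =>
    exfalso
    apply hb1
    have : a - (((j' + 1 : ℕ)) : ZMod N) + 1 = a - ((j' : ℕ) : ZMod N) := by push_cast; ring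
    rw [this]
    exact hr2 j' (by omega)

lemma comps_card_eq {I : Finset (ZMod N)} (hI : I ≠ Finset.univ) :
    (comps (cadj N) I).card = (I.filter (fun a => a + 1 ∉ I)).card := by
  symm
  apply Finset.card_bij (fun a _ => compOf (cadj N) I a)
  · intro a ha
    exact Finset.mem_image.mpr ⟨a, (Finset.mem_filter.mp ha).1, rfl⟩
  · intro a ha b hb hfab
    have haf := Finset.mem_filter.mp ha
    have hbf := Finset.mem_filter.mp hb
    have : b ∈ compOf (cadj N) I a := hfab ▸ mem_compOf_self hbf.1
    exact (endpoint_unique hI haf.1 haf.2 this hbf.2).symm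
  · intro C hC
    obtain ⟨s, hs, rfl⟩ := Finset.mem_image.mp hC
    obtain ⟨a, haC, ha1⟩ := exists_endpoint hI hs
    obtain ⟨haI, hsa⟩ := mem_compOf.mp haC
    exact ⟨a, Finset.mem_filter.mpr ⟨haI, ha1⟩, (compOf_eq hsa).symm⟩

lemma endpoints_compl_card (I : Finset (ZMod N)) :
    (I.filter (fun a => a + 1 ∉ I)).card =
      ((Finset.univ \ I).filter (fun a => a + 1 ∈ I)).card := by
  have h1 : (I.filter (fun a => a + 1 ∈ I)).card + (I.filter (fun a => ¬ (a + 1 ∈ I))).card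
      = I.card := Finset.card_filter_add_card_filter_not _
  set J := Finset.univ.filter (fun a : ZMod N => a + 1 ∈ I) with hJ
  have h2 : (J.filter (fun a => a ∈ I)).card + (J.filter (fun a => ¬ (a ∈ I))).card
      = J.card := Finset.card_filter_add_card_filter_not _
  have hJI : J.card = I.card := by
    refine Finset.card_bij' (fun a _ => a + 1) (fun b _ => b - 1) ?_ ?_ ?_ ?_
    · intro a ha
      exact (Finset.mem_filter.mp ha).2
    · intro b hb
      rw [hJ]
      simp only [Finset.mem_filter, Finset.mem_univ, true_and, sub_add_cancel]
      exact hb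
    · intro a _; ring
    · intro b _; ring
  have e1 : J.filter (fun a => a ∈ I) = I.filter (fun a => a + 1 ∈ I) := by
    ext x
    simp only [hJ, Finset.mem_filter, Finset.mem_univ, true_and]
    tauto
  have e2 : J.filter (fun a => ¬ (a ∈ I)) = (Finset.univ \ I).filter (fun a => a + 1 ∈ I) := by
    ext x
    simp only [hJ, Finset.mem_filter, Finset.mem_univ, true_and, Finset.mem_sdiff]
    tauto
  rw [e1] at h2
  rw [e2] at h2
  omega

lemma compl_filter_eq (I : Finset (ZMod N)) :
    ((Finset.univ \ I).filter (fun a => a + 1 ∉ Finset.univ \ I)) =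
      ((Finset.univ \ I).filter (fun a => a + 1 ∈ I)) := by
  ext x
  simp [Finset.mem_sdiff]

lemma compl_ne_univ {I : Finset (ZMod N)} (h0 : I ≠ ∅) : Finset.univ \ I ≠ Finset.univ := by
  obtain ⟨a, ha⟩ := Finset.nonempty_iff_ne_empty.mpr h0
  intro h
  have ha' : a ∈ Finset.univ \ I := by rw [h]; exact Finset.mem_univ a
  exact (Finset.mem_sdiff.mp ha').2 ha

lemma compl_ne_empty {I : Finset (ZMod N)} (h1 : I ≠ Finset.univ) : Finset.univ \ I ≠ ∅ := by
  obtain ⟨u, hu⟩ := exists_not_mem h1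
  intro h
  have : u ∈ Finset.univ \ I := Finset.mem_sdiff.mpr ⟨Finset.mem_univ u, hu⟩
  rw [h] at this
  exact absurd this (Finset.notMem_empty u)

lemma comps_card_compl {I : Finset (ZMod N)} (h0 : I ≠ ∅) (h1 : I ≠ Finset.univ) :
    (comps (cadj N) I).card = (comps (cadj N) (Finset.univ \ I)).card := by
  rw [comps_card_eq h1, comps_card_eq (compl_ne_univ h0), compl_filter_eq,
    endpoints_compl_card]

lemma parity_main (hodd : Odd N) {I : Finset (ZMod N)} (h0 : I ≠ ∅) (h1 : I ≠ Finset.univ) :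
    Odd (c0card (cadj N) I + c0card (cadj N) (Finset.univ \ I)) := by
  rw [odd_iff_cast, Nat.cast_add, c0card_cast, c0card_cast,
    comps_card_compl h0 h1]
  have h22 : ∀ a : ZMod 2, a + a = 0 := by decide
  have hcards : I.card + (Finset.univ \ I).card = N := by
    have hsub : I ⊆ Finset.univ := Finset.subset_univ I
    have := Finset.card_sdiff_of_subset hsub
    have hcu : (Finset.univ : Finset (ZMod N)).card = N := by
      rw [Finset.card_univ, ZMod.card]
    have hle := Finset.card_le_card hsub
    omega
  have hsum : ((I.card : ZMod 2) + ((Finset.univ \ I).card : ZMod 2)) = 1 := by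
    rw [← Nat.cast_add, hcards]
    exact (odd_iff_cast N).mp hodd
  set c := ((comps (cadj N) (Finset.univ \ I)).card : ZMod 2)
  calc c + (I.card : ZMod 2) + (c + ((Finset.univ \ I).card : ZMod 2))
      = (c + c) + ((I.card : ZMod 2) + ((Finset.univ \ I).card : ZMod 2)) := by ring
    _ = 1 := by rw [h22, hsum, zero_add]

lemma eSum_apply (I : Finset (ZMod N)) (t : ZMod N) :
    eSum (eVec N) I t = if t ∈ I then 1 else 0 := by
  simp [eSum, eVec, Finset.sum_apply, Finset.sum_pi_single]

lemma eSum_inj {I J : Finset (ZMod N)} (h : eSum (eVec N) I = eSum (eVec N) J) :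
    I = J := by
  ext t
  have ht := congrFun h t
  rw [eSum_apply, eSum_apply] at ht
  by_cases h1 : t ∈ I <;> by_cases h2 : t ∈ J <;> simp [h1, h2] at ht ⊢

lemma eSum_add_univ (I : Finset (ZMod N)) :
    eSum (eVec N) I + eSum (eVec N) Finset.univ = eSum (eVec N) (Finset.univ \ I) := by
  funext t
  rw [Pi.add_apply, eSum_apply, eSum_apply, eSum_apply]
  by_cases ht : t ∈ I <;> simp [ht, Finset.mem_sdiff] <;> decide

lemma mem_V0_iff (I : Finset (ZMod N)) :
    eSum (eVec N) I ∈ V0set N ↔ I ≠ Finset.univ ∧ Even (c0card (cadj N) I) := by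
  constructor
  · rintro ⟨J, hJ1, hJ2, hJ3⟩
    obtain rfl : I = J := eSum_inj hJ3
    exact ⟨hJ1, hJ2⟩
  · rintro ⟨h1, h2⟩
    exact ⟨I, h1, h2, rfl⟩

lemma mem_V1_iff (I : Finset (ZMod N)) :
    eSum (eVec N) I ∈ V1set N ↔
      I = Finset.univ ∨ (I ≠ ∅ ∧ I ≠ Finset.univ ∧ Odd (c0card (cadj N) I)) := by
  constructor
  · rintro (h | ⟨J, hJ0, hJ1, hJ2, hJ3⟩)
    · exact Or.inl (eSum_inj h)
    · obtain rfl : I = J := eSum_inj hJ3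
      exact Or.inr ⟨hJ0, hJ1, hJ2⟩
  · rintro (rfl | ⟨h0, h1, h2⟩)
    · exact Or.inl rfl
    · exact Or.inr ⟨I, h0, h1, h2, rfl⟩

lemma c0card_empty : c0card (cadj N) (∅ : Finset (ZMod N)) = 0 := by
  simp [c0card, comps]

lemma sdiff_sdiff_univ (I : Finset (ZMod N)) :
    Finset.univ \ (Finset.univ \ I) = I := by
  rw [Finset.sdiff_sdiff_self_left, Finset.univ_inter]

end S5Aux

/-- `|c^0(I)| + |c^0(S∖I)|` is odd for `∅ ≠ I ⊊ S`; consequently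
`e_I ∈ V_0 ↔ e_{S∖I} ∈ V_1`, and `x ↦ x + e_S` is a bijection `V_0 → V_1`. -/
theorem statement5 (N : ℕ) [NeZero N] (hN : 3 ≤ N) (hodd : Odd N) :
    (∀ I : Finset (ZMod N), I ≠ ∅ → I ≠ Finset.univ →
      Odd (c0card (cadj N) I + c0card (cadj N) (Finset.univ \ I))) ∧
    (∀ I : Finset (ZMod N), I ≠ ∅ → I ≠ Finset.univ →
      (eSum (eVec N) I ∈ V0set N ↔ eSum (eVec N) (Finset.univ \ I) ∈ V1set N)) ∧
    Set.BijOn (fun x => x + eSum (eVec N) Finset.univ) (V0set N) (V1set N) := by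
  have hempty_ne : (∅ : Finset (ZMod N)) ≠ Finset.univ := by
    intro h
    have : (0 : ZMod N) ∈ (∅ : Finset (ZMod N)) := by rw [h]; exact Finset.mem_univ 0
    exact absurd this (Finset.notMem_empty 0)
  refine ⟨fun I h0 h1 => parity_main hodd h0 h1, ?_, ?_, ?_, ?_⟩
  · -- equivalence
    intro I h0 h1
    rw [mem_V0_iff, mem_V1_iff]
    have hpar := parity_main hodd h0 h1
    have hC0 := compl_ne_univ h0
    have hC1 := compl_ne_empty h1
    rw [Nat.odd_iff] at hpar
    rw [Nat.even_iff]
    constructor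
    · rintro ⟨-, he⟩
      refine Or.inr ⟨hC1, hC0, ?_⟩
      rw [Nat.odd_iff]; omega
    · rintro (h | ⟨-, -, ho⟩)
      · exact absurd h hC0
      · rw [Nat.odd_iff] at ho
        exact ⟨h1, by omega⟩
  · -- MapsTo
    rintro x ⟨I, h1, hE, rfl⟩
    show eSum (eVec N) I + eSum (eVec N) Finset.univ ∈ V1set N
    rw [eSum_add_univ]
    rw [mem_V1_iff]
    by_cases h0 : I = ∅
    · subst h0
      left
      rw [Finset.sdiff_empty]
    · refine Or.inr ⟨compl_ne_empty h1, compl_ne_univ h0, ?_⟩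
      have hpar := parity_main hodd h0 h1
      rw [Nat.odd_iff] at hpar ⊢
      rw [Nat.even_iff] at hE
      omega
  · -- InjOn
    intro x _ y _ h
    exact add_right_cancel h
  · -- SurjOn
    intro y hy
    rcases hy with h | ⟨I, h0, h1, hO, rfl⟩
    · refine ⟨eSum (eVec N) ∅, ?_, ?_⟩
      · exact (mem_V0_iff ∅).mpr ⟨hempty_ne, by rw [c0card_empty]; exact Even.zero⟩
      · show eSum (eVec N) ∅ + eSum (eVec N) Finset.univ = y
        rw [h, eSum, Finset.sum_empty, zero_add]
    · refine ⟨eSum (eVec N) (Finset.univ \ I), ?_, ?_⟩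
      · rw [mem_V0_iff]
        refine ⟨compl_ne_univ h0, ?_⟩
        have hpar := parity_main hodd h0 h1
        rw [Nat.odd_iff] at hpar hO
        rw [Nat.even_iff]
        omega
      · show eSum (eVec N) (Finset.univ \ I) + eSum (eVec N) Finset.univ = eSum (eVec N) I
        rw [eSum_add_univ, sdiff_sdiff_univ]
end

section
/- Let N ≥ 3 be odd and let (S,E) be the cycle of length N, V = F^S, Vbar = V/(F·e_S), pi: V → Vbar the quotient map. For every B in phi(Vbar): M_B ⊆ V_0, e_S is not in M_B, and pi^{−1}(L_B) = M_B ⊕ F·e_S (internal direct sum in V). -/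
namespace S7
open Finset

lemma zmod2_cases : ∀ x : ZMod 2, x = 0 ∨ x = 1 := by decide

lemma zmod2_add_self : ∀ x : ZMod 2, x + x = 0 := by decide

variable {N : ℕ} [NeZero N]

lemma eSum_apply (I : Finset (ZMod N)) (t : ZMod N) :
    eSum (eVec N) I t = if t ∈ I then 1 else 0 := by
  classical
  simp [eSum, eVec, Finset.sum_apply, Pi.single_apply]

lemma eSum_inj {I J : Finset (ZMod N)} (h : eSum (eVec N) I = eSum (eVec N) J) : I = J := by
  ext t
  have ht := congrFun h t
  rw [eSum_apply, eSum_apply] at ht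
  by_cases h1 : t ∈ I <;> by_cases h2 : t ∈ J <;> simp_all

open scoped Classical in
noncomputable def cnt {α : Type} [Fintype α] (p : α → Prop) : ℕ :=
  (Finset.univ.filter p).card

/-- indicator with a fixed (classical) decidability instance -/
noncomputable def ind (p : Prop) : ZMod 2 :=
  letI := Classical.propDecidable p
  if p then 1 else 0

lemma ind_pos {p : Prop} (h : p) : ind p = 1 := by
  rw [ind]; exact if_pos h

lemma ind_neg {p : Prop} (h : ¬ p) : ind p = 0 := by
  rw [ind]; exact if_neg h

open scoped Classical in
lemma sum_boole' {α : Type} [Fintype α] (p : α → Prop) :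
    (∑ s : α, ind (p s)) = (cnt p : ZMod 2) := by
  rw [cnt, ← Finset.sum_boole]
  apply Finset.sum_congr rfl
  intro a _
  by_cases h : p a
  · rw [ind_pos h, if_pos h]
  · rw [ind_neg h, if_neg h]

open scoped Classical in
lemma cnt_true {α : Type} [Fintype α] {p : α → Prop} (h : ∀ a, p a) :
    cnt p = Fintype.card α := by
  rw [cnt, Finset.filter_true_of_mem (fun a _ => h a), Finset.card_univ]

/-- the quadratic form: number of edges of the support, mod 2 -/
def Qf (N : ℕ) [NeZero N] (v : Vc N) : ZMod 2 := ∑ s : ZMod N, v s * v (s + 1)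

/-- the associated bilinear form -/
def Cf (N : ℕ) [NeZero N] (u v : Vc N) : ZMod 2 :=
  ∑ s : ZMod N, (u s * v (s + 1) + v s * u (s + 1))

lemma Qf_add (u v : Vc N) : Qf N (u + v) = Qf N u + Qf N v + Cf N u v := by
  simp only [Qf, Cf, Pi.add_apply, ← Finset.sum_add_distrib]
  apply Finset.sum_congr rfl
  intro s _
  ring

lemma Cf_self (u : Vc N) : Cf N u u = 0 := by
  rw [Cf]
  exact Finset.sum_eq_zero fun s _ => zmod2_add_self _

lemma Cf_comm (u v : Vc N) : Cf N u v = Cf N v u := by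
  rw [Cf, Cf]
  apply Finset.sum_congr rfl
  intro s _
  ring

lemma Cf_add_right (u v w : Vc N) : Cf N u (v + w) = Cf N u v + Cf N u w := by
  simp only [Cf, Pi.add_apply, ← Finset.sum_add_distrib]
  apply Finset.sum_congr rfl
  intro s _
  ring

lemma Cf_sum_right {ι : Type} (u : Vc N) (t : Finset ι) (g : ι → Vc N) :
    Cf N u (∑ i ∈ t, g i) = ∑ i ∈ t, Cf N u (g i) := by
  classical
  induction t using Finset.induction_on with
  | empty => simp [Cf]
  | insert _ _ h ih => rw [Finset.sum_insert h, Cf_add_right, ih, Finset.sum_insert h]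

lemma natCast_zmod2_eq_zero_iff (n : ℕ) : (n : ZMod 2) = 0 ↔ Even n := by
  rw [ZMod.natCast_eq_zero_iff]
  exact ⟨fun h => (even_iff_two_dvd).mpr h, fun h => (even_iff_two_dvd).mp h⟩

lemma Qf_eSum (I : Finset (ZMod N)) :
    Qf N (eSum (eVec N) I) = (cnt (fun s : ZMod N => s ∈ I ∧ s + 1 ∈ I) : ZMod 2) := by
  rw [Qf, ← sum_boole']
  apply Finset.sum_congr rfl
  intro s _
  rw [eSum_apply, eSum_apply]
  by_cases h1 : s ∈ I <;> by_cases h2 : s + 1 ∈ I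
  · rw [if_pos h1, if_pos h2, ind_pos ⟨h1, h2⟩]; decide
  · rw [if_pos h1, if_neg h2, ind_neg (fun h => h2 h.2)]; decide
  · rw [if_neg h1, if_pos h2, ind_neg (fun h => h1 h.1)]; decide
  · rw [if_neg h1, if_neg h2, ind_neg (fun h => h1 h.1)]; decide

lemma Cf_eSum_disj {I K : Finset (ZMod N)} (hd : ∀ s, s ∈ I → s ∉ K) :
    Cf N (eSum (eVec N) I) (eSum (eVec N) K)
      = (cnt (fun s : ZMod N => (s ∈ I ∧ s + 1 ∈ K) ∨ (s ∈ K ∧ s + 1 ∈ I)) : ZMod 2) := by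
  rw [Cf, ← sum_boole']
  apply Finset.sum_congr rfl
  intro s _
  rw [eSum_apply, eSum_apply, eSum_apply, eSum_apply]
  by_cases h1 : s ∈ I
  · have h3 : s ∉ K := hd s h1
    by_cases h2 : s + 1 ∈ K
    · rw [if_pos h1, if_pos h2, if_neg h3, ind_pos (Or.inl ⟨h1, h2⟩)]; simp
    · rw [if_pos h1, if_neg h2, if_neg h3,
        ind_neg (fun h => by rcases h with ⟨-, h⟩ | ⟨h, -⟩ <;> [exact h2 h; exact h3 h])]
      simp
  · by_cases h3 : s ∈ K
    · by_cases h4 : s + 1 ∈ I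
      · rw [if_neg h1, if_pos h3, if_pos h4, ind_pos (Or.inr ⟨h3, h4⟩)]; simp
      · rw [if_neg h1, if_pos h3, if_neg h4,
          ind_neg (fun h => by rcases h with ⟨h, -⟩ | ⟨-, h⟩ <;> [exact h1 h; exact h4 h])]
        simp
    · rw [if_neg h1, if_neg h3,
        ind_neg (fun h => by rcases h with ⟨h, -⟩ | ⟨h, -⟩ <;> [exact h1 h; exact h3 h])]
      simp

lemma two_ne_zero_zmod (hN3 : 3 ≤ N) : (2 : ZMod N) ≠ 0 := by
  intro h
  have h2 : ((2 : ℕ) : ZMod N) = 0 := by exact_mod_cast h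
  have := (ZMod.natCast_eq_zero_iff 2 N).mp h2
  have := Nat.le_of_dvd (by norm_num) this
  omega

/-- The key bijection between edges of a subset of a path (counted in the cycle)
and consecutive index pairs. -/
lemma card_edge_bij (hN3 : 3 ≤ N) {m : ℕ} {f : Fin (m + 1) → ZMod N}
    (hinj : Function.Injective f)
    (hadj : ∀ i j, cadj N (f i) (f j) ↔ ((i : ℕ) + 1 = (j : ℕ) ∨ (j : ℕ) + 1 = (i : ℕ)))
    (q : ZMod N → ZMod N → Prop)
    (hsymm : ∀ s t, q s t → q t s)
    (hsub : ∀ s t, q s t → (∃ i, f i = s) ∧ (∃ j, f j = t)) :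
    cnt (fun a : Fin m => q (f a.castSucc) (f a.succ)) = cnt (fun s : ZMod N => q s (s + 1)) := by
  classical
  set g : Fin m → ZMod N := fun a => if f a.succ = f a.castSucc + 1 then f a.castSucc else f a.succ with hg
  have hadj' : ∀ a : Fin m, f a.succ = f a.castSucc + 1 ∨ f a.castSucc = f a.succ + 1 := by
    intro a
    have : cadj N (f a.castSucc) (f a.succ) := (hadj _ _).mpr (Or.inl (by simp))
    exact this
  have key : ∀ a : Fin m,
      (f a.castSucc = g a ∧ f a.succ = g a + 1) ∨ (f a.succ = g a ∧ f a.castSucc = g a + 1) := by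
    intro a
    by_cases hc : f a.succ = f a.castSucc + 1
    · left
      constructor
      · simp [hg, hc]
      · rw [hc]; simp [hg, hc]
    · right
      rcases hadj' a with h | h
      · exact absurd h hc
      · constructor
        · simp [hg, hc]
        · rw [h]; simp [hg, hc]
  rw [cnt, cnt]
  apply Finset.card_bij (fun a _ => g a)
  · intro a ha
    rw [Finset.mem_filter] at ha ⊢
    refine ⟨Finset.mem_univ _, ?_⟩
    rcases key a with ⟨h1, h2⟩ | ⟨h1, h2⟩
    · rw [← h2, ← h1]; exact ha.2
    · rw [← h2, ← h1]; exact hsymm _ _ ha.2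
  · intro a ha a' ha' h
    have vals : ∀ b b' : Fin (m+1), f b = f b' → (b : ℕ) = (b' : ℕ) := by
      intro b b' hb; exact congrArg Fin.val (hinj hb)
    rcases key a with ⟨h1, h2⟩ | ⟨h1, h2⟩ <;> rcases key a' with ⟨h1', h2'⟩ | ⟨h1', h2'⟩ <;>
    · apply Fin.ext
      have e1 := vals _ _ (h1.trans (h ▸ h1'.symm))
      have e2 := vals _ _ (h2.trans (h ▸ h2'.symm))
      simp only [Fin.coe_castSucc, Fin.val_succ] at e1 e2
      omega
  · intro s hs
    rw [Finset.mem_filter] at hs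
    obtain ⟨⟨i, hi⟩, ⟨j, hj⟩⟩ := hsub s (s + 1) hs.2
    have hc : cadj N (f i) (f j) := by rw [hi, hj]; exact Or.inl rfl
    rcases (hadj i j).mp hc with h | h
    · have him : (i : ℕ) < m := by have := j.isLt; omega
      refine ⟨⟨(i : ℕ), him⟩, ?_, ?_⟩
      · rw [Finset.mem_filter]
        refine ⟨Finset.mem_univ _, ?_⟩
        have hcs : (⟨(i : ℕ), him⟩ : Fin m).castSucc = i := Fin.ext (by simp)
        have hsc : (⟨(i : ℕ), him⟩ : Fin m).succ = j := Fin.ext (by simp [h])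
        rw [hcs, hsc, hi, hj]; exact hs.2
      · have hcs : (⟨(i : ℕ), him⟩ : Fin m).castSucc = i := Fin.ext (by simp)
        have hsc : (⟨(i : ℕ), him⟩ : Fin m).succ = j := Fin.ext (by simp [h])
        show g ⟨(i : ℕ), him⟩ = s
        simp only [hg]
        rw [hcs, hsc, hi, hj, if_pos rfl]
    · have hjm : (j : ℕ) < m := by have := i.isLt; omega
      have hcs : (⟨(j : ℕ), hjm⟩ : Fin m).castSucc = j := Fin.ext (by simp)
      have hsc : (⟨(j : ℕ), hjm⟩ : Fin m).succ = i := Fin.ext (by simp [h])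
      have hcond : ¬ (f (⟨(j : ℕ), hjm⟩ : Fin m).succ = f (⟨(j : ℕ), hjm⟩ : Fin m).castSucc + 1) := by
        rw [hcs, hsc, hi, hj]
        intro hcon
        exact two_ne_zero_zmod hN3 (by linear_combination -hcon)
      refine ⟨⟨(j : ℕ), hjm⟩, ?_, ?_⟩
      · rw [Finset.mem_filter]
        refine ⟨Finset.mem_univ _, ?_⟩
        rw [hcs, hsc, hi, hj]
        exact hsymm _ _ hs.2
      · show g ⟨(j : ℕ), hjm⟩ = s
        simp only [hg]
        rw [if_neg hcond, hsc, hi]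

lemma rel_symm (K : Finset (ZMod N)) :
    Symmetric (fun a b => a ∈ K ∧ b ∈ K ∧ cadj N a b) := by
  intro a b ⟨h1, h2, h3⟩
  exact ⟨h2, h1, by unfold cadj at *; tauto⟩

lemma rts_symm (K : Finset (ZMod N)) ⦃a b : ZMod N⦄
    (h : Relation.ReflTransGen (fun a b => a ∈ K ∧ b ∈ K ∧ cadj N a b) a b) :
    Relation.ReflTransGen (fun a b => a ∈ K ∧ b ∈ K ∧ cadj N a b) b a := by
  induction h with
  | refl => exact Relation.ReflTransGen.refl
  | tail _ hbc ih => exact Relation.ReflTransGen.head (rel_symm K hbc) ih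

lemma walk {m : ℕ} {f : Fin (m + 1) → ZMod N}
    (hadj : ∀ i j, cadj N (f i) (f j) ↔ ((i : ℕ) + 1 = (j : ℕ) ∨ (j : ℕ) + 1 = (i : ℕ)))
    (K : Finset (ZMod N)) (c d : Fin (m + 1)) (hcd : (c : ℕ) ≤ (d : ℕ))
    (hK : ∀ e : Fin (m + 1), (c : ℕ) ≤ (e : ℕ) → (e : ℕ) ≤ (d : ℕ) → f e ∈ K) :
    Relation.ReflTransGen (fun a b => a ∈ K ∧ b ∈ K ∧ cadj N a b) (f c) (f d) := by
  have main : ∀ n : ℕ, ∀ hn : (c : ℕ) + n ≤ (d : ℕ),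
      Relation.ReflTransGen (fun a b => a ∈ K ∧ b ∈ K ∧ cadj N a b) (f c)
        (f ⟨(c : ℕ) + n, lt_of_le_of_lt hn d.isLt⟩) := by
    intro n
    induction n with
    | zero =>
      intro hn
      have he : (⟨(c : ℕ) + 0, lt_of_le_of_lt hn d.isLt⟩ : Fin (m + 1)) = c := Fin.ext (by simp)
      rw [he]
    | succ k ih =>
      intro hn
      refine Relation.ReflTransGen.tail (ih (by omega)) ?_
      refine ⟨hK _ (by simp) (by simp; omega), hK _ (by simp) (by simp; omega), ?_⟩
      exact (hadj _ _).mpr (Or.inl (by simp; omega))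
  have h0 := main ((d : ℕ) - (c : ℕ)) (by omega)
  convert h0 using 2
  exact Fin.ext (by simp; omega)

lemma connOn_of_path {I : Finset (ZMod N)} (h : IsPathOn (cadj N) I) : ConnOn (cadj N) I := by
  obtain ⟨m, f, hinj, himg, hadj⟩ := h
  intro s hs t ht
  rw [himg] at hs ht
  obtain ⟨i, -, hi⟩ := Finset.mem_image.mp hs
  obtain ⟨j, -, hj⟩ := Finset.mem_image.mp ht
  have hIK : ∀ e : Fin (m + 1), f e ∈ I := fun e => by
    rw [himg]; exact Finset.mem_image_of_mem _ (Finset.mem_univ _)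
  rcases le_total (i : ℕ) (j : ℕ) with hle | hle
  · rw [← hi, ← hj]; exact walk hadj I i j hle (fun e _ _ => hIK e)
  · rw [← hi, ← hj]
    exact (rts_symm I) (walk hadj I j i hle (fun e _ _ => hIK e))

lemma interval {m : ℕ} {f : Fin (m + 1) → ZMod N} (hinj : Function.Injective f)
    (hadj : ∀ i j, cadj N (f i) (f j) ↔ ((i : ℕ) + 1 = (j : ℕ) ∨ (j : ℕ) + 1 = (i : ℕ)))
    {I : Finset (ZMod N)} (hIsub : ∀ x ∈ I, ∃ j, f j = x)
    (hconn : ConnOn (cadj N) I) (a c b : Fin (m + 1)) (ha : f a ∈ I) (hb : f b ∈ I)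
    (h1 : (a : ℕ) ≤ (c : ℕ)) (h2 : (c : ℕ) ≤ (b : ℕ)) : f c ∈ I := by
  by_contra hc
  have key : ∀ t, Relation.ReflTransGen (fun x y => x ∈ I ∧ y ∈ I ∧ cadj N x y) (f a) t →
      ∃ j : Fin (m + 1), (j : ℕ) < (c : ℕ) ∧ t = f j := by
    intro t h
    induction h with
    | refl =>
      refine ⟨a, ?_, rfl⟩
      have hne : (a : ℕ) ≠ (c : ℕ) := fun hv => hc ((Fin.ext hv : a = c) ▸ ha)
      omega
    | tail hst hstep ih =>
      obtain ⟨j, hjc, rfl⟩ := ih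
      obtain ⟨hj_mem, ht_mem, hcadj⟩ := hstep
      obtain ⟨j', hj'⟩ := hIsub _ ht_mem
      have hcon := (hadj j j').mp (by rw [hj']; exact hcadj)
      have hne : (j' : ℕ) ≠ (c : ℕ) := fun hv => hc ((Fin.ext hv : j' = c) ▸ (hj' ▸ ht_mem))
      exact ⟨j', by omega, hj'.symm⟩
  obtain ⟨j, hjc, hbj⟩ := key (f b) (hconn _ ha _ hb)
  have hbj' : b = j := hinj hbj
  have := congrArg Fin.val hbj'
  omega

lemma prec_conn {m : ℕ} {f : Fin (m + 1) → ZMod N} (hinj : Function.Injective f)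
    (hadj : ∀ i j, cadj N (f i) (f j) ↔ ((i : ℕ) + 1 = (j : ℕ) ∨ (j : ℕ) + 1 = (i : ℕ)))
    {I' : Finset (ZMod N)} (himg : I' = Finset.image f Finset.univ)
    {I : Finset (ZMod N)} (hIsub : I ⊆ I') (hconn : ConnOn (cadj N) I)
    (hend : f 0 ∈ I ∨ f (Fin.last m) ∈ I) : ConnOn (cadj N) (I' \ I) := by
  have hIsub' : ∀ x ∈ I, ∃ j, f j = x := by
    intro x hx
    have := hIsub hx
    rw [himg] at this
    obtain ⟨j, -, hj⟩ := Finset.mem_image.mp this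
    exact ⟨j, hj⟩
  have main : ∀ cc dd : Fin (m + 1), (cc : ℕ) ≤ (dd : ℕ) → f cc ∈ I' \ I → f dd ∈ I' \ I →
      Relation.ReflTransGen (fun a b => a ∈ I' \ I ∧ b ∈ I' \ I ∧ cadj N a b) (f cc) (f dd) := by
    intro cc dd hle hcc hdd
    apply walk hadj
    · exact hle
    intro e he1 he2
    rw [Finset.mem_sdiff]
    refine ⟨by rw [himg]; exact Finset.mem_image_of_mem _ (Finset.mem_univ _), ?_⟩
    intro heI
    rcases hend with h0 | hlast
    · have : f cc ∈ I := interval hinj hadj hIsub' hconn 0 cc e h0 heI (by simp) he1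
      exact (Finset.mem_sdiff.mp hcc).2 this
    · have : f dd ∈ I := interval hinj hadj hIsub' hconn e dd (Fin.last m) heI hlast he2
        (by simp [Fin.le_last]; omega)
      exact (Finset.mem_sdiff.mp hdd).2 this
  intro s hs t ht
  have hs' : s ∈ I' := (Finset.mem_sdiff.mp hs).1
  have ht' : t ∈ I' := (Finset.mem_sdiff.mp ht).1
  rw [himg] at hs' ht'
  obtain ⟨i, -, hi⟩ := Finset.mem_image.mp hs'
  obtain ⟨j, -, hj⟩ := Finset.mem_image.mp ht'
  rcases le_total (i : ℕ) (j : ℕ) with hle | hle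
  · rw [← hi, ← hj]; exact main i j hle (hi.symm ▸ hs) (hj.symm ▸ ht)
  · rw [← hi, ← hj]
    exact (rts_symm (I' \ I))
      (main j i hle (hj.symm ▸ ht) (hi.symm ▸ hs))

lemma cross_conn {I I' : Finset (ZMod N)} (hI : ConnOn (cadj N) I) (hI' : ConnOn (cadj N) I')
    {x : ZMod N} (hx : x ∈ I) (hx1 : x + 1 ∈ I') : ConnOn (cadj N) (I ∪ I') := by
  intro s hs t ht
  have liftI : ∀ {a b : ZMod N}, a ∈ I → b ∈ I →
      Relation.ReflTransGen (fun u v => u ∈ I ∪ I' ∧ v ∈ I ∪ I' ∧ cadj N u v) a b := by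
    intro a b ha hb
    exact Relation.ReflTransGen.mono (r := fun a b => a ∈ I ∧ b ∈ I ∧ cadj N a b)
      (p := fun u v => u ∈ I ∪ I' ∧ v ∈ I ∪ I' ∧ cadj N u v)
      (fun u v h => ⟨Finset.mem_union_left _ h.1, Finset.mem_union_left _ h.2.1, h.2.2⟩) _ _
      (hI a ha b hb)
  have liftI' : ∀ {a b : ZMod N}, a ∈ I' → b ∈ I' →
      Relation.ReflTransGen (fun u v => u ∈ I ∪ I' ∧ v ∈ I ∪ I' ∧ cadj N u v) a b := by
    intro a b ha hb
    exact Relation.ReflTransGen.mono (r := fun a b => a ∈ I' ∧ b ∈ I' ∧ cadj N a b)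
      (p := fun u v => u ∈ I ∪ I' ∧ v ∈ I ∪ I' ∧ cadj N u v)
      (fun u v h => ⟨Finset.mem_union_right _ h.1, Finset.mem_union_right _ h.2.1, h.2.2⟩) _ _
      (hI' a ha b hb)
  have bridge : Relation.ReflTransGen (fun u v => u ∈ I ∪ I' ∧ v ∈ I ∪ I' ∧ cadj N u v) x (x + 1) :=
    Relation.ReflTransGen.single
      ⟨Finset.mem_union_left _ hx, Finset.mem_union_right _ hx1, Or.inl rfl⟩
  have hsymmU := rts_symm (I ∪ I')
  rcases Finset.mem_union.mp hs with h | h <;> rcases Finset.mem_union.mp ht with h' | h'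
  · exact liftI h h'
  · exact ((liftI h hx).trans bridge).trans (liftI' hx1 h')
  · exact hsymmU (((liftI h' hx).trans bridge).trans (liftI' hx1 h))
  · exact liftI' h h'

lemma spade_nocross {I I' : Finset (ZMod N)} (hI : ConnOn (cadj N) I)
    (hI' : ConnOn (cadj N) I') (hcon : ¬ ConnOn (cadj N) (I ∪ I')) (s : ZMod N) :
    ¬(s ∈ I ∧ s + 1 ∈ I') ∧ ¬(s ∈ I' ∧ s + 1 ∈ I) := by
  constructor
  · rintro ⟨h1, h2⟩
    exact hcon (cross_conn hI hI' h1 h2)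
  · rintro ⟨h1, h2⟩
    have := cross_conn hI' hI h1 h2
    rw [Finset.union_comm] at this
    exact hcon this

lemma Qf_path (hN3 : 3 ≤ N) {I : Finset (ZMod N)} (hI : CalI1 (cadj N) I) :
    Qf N (eSum (eVec N) I) = 0 := by
  classical
  obtain ⟨⟨m, f, hinj, himg, hadj⟩, hodd⟩ := hI
  rw [Qf_eSum]
  have hmem : ∀ e : Fin (m + 1), f e ∈ I := fun e => by
    rw [himg]; exact Finset.mem_image_of_mem _ (Finset.mem_univ _)
  have hfind : ∀ x ∈ I, ∃ j, f j = x := by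
    intro x hx
    obtain ⟨j, -, hj⟩ := Finset.mem_image.mp (himg ▸ hx)
    exact ⟨j, hj⟩
  have hb := card_edge_bij hN3 hinj hadj (fun s t => s ∈ I ∧ t ∈ I)
    (fun s t h => ⟨h.2, h.1⟩)
    (fun s t h => ⟨hfind s h.1, hfind t h.2⟩)
  rw [← hb]
  have hall : cnt (fun a : Fin m => f a.castSucc ∈ I ∧ f a.succ ∈ I) = m := by
    rw [cnt_true (fun a => ⟨hmem _, hmem _⟩)]
    simp
  rw [hall, natCast_zmod2_eq_zero_iff]
  have hcard : I.card = m + 1 := by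
    rw [himg, Finset.card_image_of_injective _ hinj]; simp
  rw [hcard] at hodd
  exact Nat.not_odd_iff_even.mp (Nat.odd_add_one.mp hodd)

lemma telescope {m : ℕ} (x : Fin (m + 1) → ZMod 2) :
    (∑ a : Fin m, x a.castSucc) + (∑ a : Fin m, x a.succ) = x 0 + x (Fin.last m) := by
  have h1 := Fin.sum_univ_castSucc (f := x)
  have h2 := Fin.sum_univ_succ (f := x)
  have h3 : (2 : ZMod 2) = 0 := rfl
  linear_combination h2 - h1 + ((∑ a : Fin m, x a.succ) - x (Fin.last m)) * h3

lemma Cf_prec (hN3 : 3 ≤ N) {I I' : Finset (ZMod N)} (hI : CalI1 (cadj N) I)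
    (hI' : CalI1 (cadj N) I') (hprec : Prec (cadj N) I I') :
    Cf N (eSum (eVec N) I) (eSum (eVec N) I') = 0 := by
  classical
  obtain ⟨m, f, hinj, himg, hadj⟩ := hI'.1
  obtain ⟨hssub, hnecon⟩ := hprec
  have hsub : I ⊆ I' := hssub.subset
  have hIconn := connOn_of_path hI.1
  have hfind' : ∀ x ∈ I', ∃ j, f j = x := by
    intro x hx
    obtain ⟨j, -, hj⟩ := Finset.mem_image.mp (himg ▸ hx)
    exact ⟨j, hj⟩
  have hsplit : eSum (eVec N) I' = eSum (eVec N) I + eSum (eVec N) (I' \ I) := by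
    simp only [eSum]
    rw [← Finset.sum_sdiff hsub, add_comm]
  rw [hsplit, Cf_add_right, Cf_self, zero_add]
  have hd : ∀ s, s ∈ I → s ∉ I' \ I := fun s h hk => (Finset.mem_sdiff.mp hk).2 h
  rw [Cf_eSum_disj hd]
  have hb := card_edge_bij hN3 hinj hadj
      (fun s t => (s ∈ I ∧ t ∈ I' \ I) ∨ (s ∈ I' \ I ∧ t ∈ I))
      (fun s t h => by tauto)
      (fun s t h => by
        rcases h with ⟨h1, h2⟩ | ⟨h1, h2⟩
        · exact ⟨hfind' s (hsub h1), hfind' t (Finset.mem_sdiff.mp h2).1⟩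
        · exact ⟨hfind' s (Finset.mem_sdiff.mp h1).1, hfind' t (hsub h2)⟩)
  rw [← hb, ← sum_boole']
  set x : Fin (m + 1) → ZMod 2 := fun b => ind (f b ∈ I) with hx
  have hterm : ∀ a : Fin m,
      ind ((f a.castSucc ∈ I ∧ f a.succ ∈ I' \ I) ∨ (f a.castSucc ∈ I' \ I ∧ f a.succ ∈ I))
        = x a.castSucc + x a.succ := by
    intro a
    have hcs : f a.castSucc ∈ I' := by rw [himg]; exact Finset.mem_image_of_mem _ (Finset.mem_univ _)
    have hsc : f a.succ ∈ I' := by rw [himg]; exact Finset.mem_image_of_mem _ (Finset.mem_univ _)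
    simp only [hx]
    by_cases h1 : f a.castSucc ∈ I <;> by_cases h2 : f a.succ ∈ I
    · rw [ind_pos h1, ind_pos h2,
        ind_neg (fun h => by rcases h with ⟨-, h⟩ | ⟨h, -⟩ <;>
          [exact (Finset.mem_sdiff.mp h).2 h2; exact (Finset.mem_sdiff.mp h).2 h1])]
      decide
    · rw [ind_pos h1, ind_neg h2, ind_pos (Or.inl ⟨h1, Finset.mem_sdiff.mpr ⟨hsc, h2⟩⟩)]
      decide
    · rw [ind_neg h1, ind_pos h2, ind_pos (Or.inr ⟨Finset.mem_sdiff.mpr ⟨hcs, h1⟩, h2⟩)]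
      decide
    · rw [ind_neg h1, ind_neg h2,
        ind_neg (fun h => by rcases h with ⟨h, -⟩ | ⟨-, h⟩ <;> [exact h1 h; exact h2 h])]
      decide
  show (∑ a : Fin m,
      ind ((f a.castSucc ∈ I ∧ f a.succ ∈ I' \ I) ∨ (f a.castSucc ∈ I' \ I ∧ f a.succ ∈ I))) = 0
  rw [Finset.sum_congr rfl (fun a _ => hterm a), Finset.sum_add_distrib, telescope]
  have h0 : f 0 ∉ I := fun h => hnecon (prec_conn hinj hadj himg hsub hIconn (Or.inl h))
  have hl : f (Fin.last m) ∉ I := fun h => hnecon (prec_conn hinj hadj himg hsub hIconn (Or.inr h))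
  simp only [hx]
  rw [ind_neg h0, ind_neg hl]
  decide

lemma Cf_spade {I I' : Finset (ZMod N)} (hIc : ConnOn (cadj N) I) (hI'c : ConnOn (cadj N) I')
    (hsp : Spade (cadj N) I I') :
    Cf N (eSum (eVec N) I) (eSum (eVec N) I') = 0 := by
  obtain ⟨hint, hcon⟩ := hsp
  rw [Cf]
  apply Finset.sum_eq_zero
  intro s _
  rw [eSum_apply, eSum_apply, eSum_apply, eSum_apply]
  obtain ⟨hc1, hc2⟩ := spade_nocross hIc hI'c hcon s
  by_cases h1 : s ∈ I
  · have h2 : s + 1 ∉ I' := fun h => hc1 ⟨h1, h⟩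
    by_cases h3 : s ∈ I'
    · have h4 : s + 1 ∉ I := fun h => hc2 ⟨h3, h⟩
      simp [h1, h2, h3, h4]
    · simp [h1, h2, h3]
  · by_cases h3 : s ∈ I'
    · have h4 : s + 1 ∉ I := fun h => hc2 ⟨h3, h⟩
      simp [h1, h3, h4]
    · simp [h1, h3]

lemma Cf_two (hN3 : 3 ≤ N) {B : Finset (Finset (ZMod N))} (hB : B ∈ phiSet (cadj N))
    {I I' : Finset (ZMod N)} (hI : I ∈ B) (hI' : I' ∈ B) (hne : I ≠ I') :
    Cf N (eSum (eVec N) I) (eSum (eVec N) I') = 0 := by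
  rcases hB.2.1 I hI I' hI' with h | h | h | h
  · exact absurd h hne
  · exact Cf_spade (connOn_of_path (hB.1 I hI).1) (connOn_of_path (hB.1 I' hI').1) h
  · exact Cf_prec hN3 (hB.1 I hI) (hB.1 I' hI') h
  · rw [Cf_comm]; exact Cf_prec hN3 (hB.1 I' hI') (hB.1 I hI) h

lemma Qf_span (hN3 : 3 ≤ N) {B : Finset (Finset (ZMod N))} (hB : B ∈ phiSet (cadj N)) :
    ∀ T : Finset (Finset (ZMod N)), T ⊆ B → Qf N (∑ I ∈ T, eSum (eVec N) I) = 0 := by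
  intro T
  induction T using Finset.induction_on with
  | empty => intro _; simp [Qf]
  | @insert I T' hIT ih =>
    intro hsub
    have hIB : I ∈ B := hsub (Finset.mem_insert_self _ _)
    have hT'B : T' ⊆ B := fun y hy => hsub (Finset.mem_insert_of_mem hy)
    have hz : ∀ I' ∈ T', Cf N (eSum (eVec N) I) (eSum (eVec N) I') = 0 :=
      fun I' hI' => Cf_two hN3 hB hIB (hT'B hI') (fun h => hIT (h ▸ hI'))
    rw [Finset.sum_insert hIT, Qf_add, Qf_path hN3 (hB.1 I hIB), ih hT'B, Cf_sum_right,
      Finset.sum_eq_zero hz]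
    simp

/-- a point of the arc: `s - l + j` -/
def arcm (s : ZMod N) (l j : ℕ) : ZMod N := s - ((l : ℕ) : ZMod N) + ((j : ℕ) : ZMod N)

lemma mem_compOf {J : Finset (ZMod N)} {s t : ZMod N} :
    t ∈ compOf (cadj N) J s ↔ t ∈ J ∧
      Relation.ReflTransGen (fun a b => a ∈ J ∧ b ∈ J ∧ cadj N a b) s t := by
  simp [compOf, Finset.mem_filter]

lemma compOf_congr {J : Finset (ZMod N)} {s t : ZMod N} (ht : t ∈ compOf (cadj N) J s) :
    compOf (cadj N) J t = compOf (cadj N) J s := by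
  obtain ⟨htJ, hst⟩ := mem_compOf.mp ht
  ext x
  rw [mem_compOf, mem_compOf]
  constructor
  · rintro ⟨hx, h⟩
    exact ⟨hx, hst.trans h⟩
  · rintro ⟨hx, h⟩
    exact ⟨hx, ((rts_symm J) hst).trans h⟩

lemma comp_card (hN3 : 3 ≤ N) {J : Finset (ZMod N)} (hJ : J ≠ Finset.univ) {s : ZMod N}
    (hs : s ∈ J) :
    (compOf (cadj N) J s).card
      = ((compOf (cadj N) J s).filter (fun x => x + 1 ∈ compOf (cadj N) J s)).card + 1 := by
  classical
  obtain ⟨z, hz⟩ : ∃ z, z ∉ J := by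
    by_contra h
    push_neg at h
    exact hJ (Finset.eq_univ_iff_forall.mpr h)
  have hzs : z ≠ s := fun h => hz (h ▸ hs)
  have hvl : ((((s - z).val : ℕ)) : ZMod N) = s - z := ZMod.natCast_rightInverse _
  have hvl1 : 1 ≤ (s - z).val := by
    rcases Nat.eq_zero_or_pos (s - z).val with h | h
    · exfalso
      apply hzs
      have h0 : (((0 : ℕ)) : ZMod N) = s - z := by rw [← h, hvl]
      have h1 : s - z = 0 := by rw [← h0]; simp
      exact (sub_eq_zero.mp h1).symm
    · exact h
  have hwitl : s - ((((s - z).val - 1) + 1 : ℕ) : ZMod N) ∉ J := by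
    rw [show ((s - z).val - 1 + 1 : ℕ) = (s - z).val by omega, hvl]
    intro hcon
    rw [show s - (s - z) = z by ring] at hcon
    exact hz hcon
  have hvr : ((((z - s).val : ℕ)) : ZMod N) = z - s := ZMod.natCast_rightInverse _
  have hvr1 : 1 ≤ (z - s).val := by
    rcases Nat.eq_zero_or_pos (z - s).val with h | h
    · exfalso
      apply hzs
      have h0 : (((0 : ℕ)) : ZMod N) = z - s := by rw [← h, hvr]
      have h1 : z - s = 0 := by rw [← h0]; simp
      exact sub_eq_zero.mp h1
    · exact h
  have hwitr : s + ((((z - s).val - 1) + 1 : ℕ) : ZMod N) ∉ J := by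
    rw [show ((z - s).val - 1 + 1 : ℕ) = (z - s).val by omega, hvr]
    intro hcon
    rw [show s + (z - s) = z by ring] at hcon
    exact hz hcon
  have hex_l : ∃ j : ℕ, s - ((j + 1 : ℕ) : ZMod N) ∉ J := ⟨_, hwitl⟩
  have hex_r : ∃ j : ℕ, s + ((j + 1 : ℕ) : ZMod N) ∉ J := ⟨_, hwitr⟩
  set l := Nat.find hex_l with hldef
  set r := Nat.find hex_r with hrdef
  have hl1 : s - ((l + 1 : ℕ) : ZMod N) ∉ J := Nat.find_spec hex_l
  have hr1 : s + ((r + 1 : ℕ) : ZMod N) ∉ J := Nat.find_spec hex_r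
  have hl2 : ∀ j : ℕ, j ≤ l → s - ((j : ℕ) : ZMod N) ∈ J := by
    intro j hj
    cases j with
    | zero => simpa using hs
    | succ k =>
      have hk : k < l := by omega
      exact not_not.mp (Nat.find_min hex_l hk)
  have hr2 : ∀ j : ℕ, j ≤ r → s + ((j : ℕ) : ZMod N) ∈ J := by
    intro j hj
    cases j with
    | zero => simpa using hs
    | succ k =>
      have hk : k < r := by omega
      exact not_not.mp (Nat.find_min hex_r hk)
  have hlb : l + 1 < N := by
    have h1 := Nat.find_min' hex_l hwitl
    have h2 := ZMod.val_lt (s - z)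
    omega
  have hrb : r + 1 < N := by
    have h1 := Nat.find_min' hex_r hwitr
    have h2 := ZMod.val_lt (z - s)
    omega
  have hlr : l + r + 2 ≤ N := by
    by_contra hcon
    push_neg at hcon
    have hj : N - (l + 1) ≤ r := by omega
    have hcast : s + ((N - (l + 1) : ℕ) : ZMod N) = s - ((l + 1 : ℕ) : ZMod N) := by
      rw [Nat.cast_sub (by omega : l + 1 ≤ N), ZMod.natCast_self]
      push_cast
      ring
    exact hl1 (hcast ▸ hr2 _ hj)
  set A := (Finset.range (l + r + 1)).image (arcm s l) with hA
  have harc_le : ∀ j : ℕ, j ≤ l → arcm s l j = s - ((l - j : ℕ) : ZMod N) := by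
    intro j h
    rw [arcm, Nat.cast_sub h]
    ring
  have harc_gt : ∀ j : ℕ, l ≤ j → arcm s l j = s + ((j - l : ℕ) : ZMod N) := by
    intro j h
    rw [arcm, Nat.cast_sub h]
    ring
  have hAJ : ∀ j : ℕ, j ≤ l + r → arcm s l j ∈ J := by
    intro j hj
    rcases le_or_gt j l with h | h
    · rw [harc_le j h]; exact hl2 _ (by omega)
    · rw [harc_gt j h.le]; exact hr2 _ (by omega)
  have hfwd : ∀ i : ℕ, i ≤ r →
      Relation.ReflTransGen (fun a b => a ∈ J ∧ b ∈ J ∧ cadj N a b) s (s + ((i : ℕ) : ZMod N)) := by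
    intro i
    induction i with
    | zero => intro _; simpa using Relation.ReflTransGen.refl
    | succ k ih =>
      intro hk
      refine (ih (by omega)).tail ⟨hr2 k (by omega), hr2 (k + 1) hk, Or.inl (by push_cast; ring)⟩
  have hbwd : ∀ i : ℕ, i ≤ l →
      Relation.ReflTransGen (fun a b => a ∈ J ∧ b ∈ J ∧ cadj N a b) s (s - ((i : ℕ) : ZMod N)) := by
    intro i
    induction i with
    | zero => intro _; simpa using Relation.ReflTransGen.refl
    | succ k ih =>
      intro hk
      refine (ih (by omega)).tail ⟨hl2 k (by omega), hl2 (k + 1) hk, Or.inr (by push_cast; ring)⟩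
  have hAC : A ⊆ compOf (cadj N) J s := by
    intro x hx
    rw [hA, Finset.mem_image] at hx
    obtain ⟨j, hj, rfl⟩ := hx
    rw [Finset.mem_range] at hj
    rw [mem_compOf]
    refine ⟨hAJ j (by omega), ?_⟩
    rcases le_or_gt j l with h | h
    · rw [harc_le j h]; exact hbwd _ (by omega)
    · rw [harc_gt j h.le]; exact hfwd _ (by omega)
  have hCA : compOf (cadj N) J s ⊆ A := by
    intro x hx
    rw [mem_compOf] at hx
    have key : ∀ t, Relation.ReflTransGen (fun a b => a ∈ J ∧ b ∈ J ∧ cadj N a b) s t →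
        t ∈ A := by
      intro t h
      induction h with
      | refl =>
        rw [hA, Finset.mem_image]
        exact ⟨l, Finset.mem_range.mpr (by omega), by rw [arcm]; ring⟩
      | tail hst hstep ih =>
        rename_i b c
        obtain ⟨hbJ, hcJ, hcadj⟩ := hstep
        rw [hA, Finset.mem_image] at ih
        obtain ⟨j, hjr, hbj⟩ := ih
        rw [Finset.mem_range] at hjr
        rcases hcadj with hcb | hbc1
        · rcases lt_or_ge j (l + r) with h | h
          · rw [hA, Finset.mem_image]
            refine ⟨j + 1, Finset.mem_range.mpr (by omega), ?_⟩
            rw [hcb, ← hbj, arcm, arcm]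
            push_cast
            ring
          · exfalso
            have hj' : j = l + r := by omega
            apply hr1
            have he : s + ((r + 1 : ℕ) : ZMod N) = c := by
              rw [hcb, ← hbj, hj', arcm]
              push_cast
              ring
            rw [he]
            exact hcJ
        · rcases Nat.eq_zero_or_pos j with h0 | h0
          · exfalso
            apply hl1
            have hb : arcm s l j = c + 1 := by rw [hbj]; exact hbc1
            rw [h0, arcm] at hb
            push_cast at hb
            have he : s - ((l + 1 : ℕ) : ZMod N) = c := by
              push_cast
              linear_combination hb
            rw [he]
            exact hcJ
          · rw [hA, Finset.mem_image]
            refine ⟨j - 1, Finset.mem_range.mpr (by omega), ?_⟩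
            have hb : arcm s l j = c + 1 := by rw [hbj]; exact hbc1
            rw [arcm] at hb
            rw [arcm, Nat.cast_sub (by omega : 1 ≤ j)]
            push_cast at hb ⊢
            linear_combination hb
    exact key x hx.2
  have hAeq : compOf (cadj N) J s = A := Finset.Subset.antisymm hCA hAC
  have hinj : ∀ j1 < l + r + 1, ∀ j2 < l + r + 1, arcm s l j1 = arcm s l j2 → j1 = j2 := by
    intro j1 h1 j2 h2 h
    rw [arcm, arcm] at h
    have hc : ((j1 : ℕ) : ZMod N) = ((j2 : ℕ) : ZMod N) := add_left_cancel h
    have := congrArg ZMod.val hc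
    rw [ZMod.val_cast_of_lt (by omega), ZMod.val_cast_of_lt (by omega)] at this
    exact this
  have hinj1 : Set.InjOn (arcm s l) (Finset.range (l + r + 1)) := by
    intro x hx y hy h
    rw [Finset.mem_coe, Finset.mem_range] at hx hy
    exact hinj x hx y hy h
  have hinj2 : Set.InjOn (arcm s l) (Finset.range (l + r)) := by
    intro x hx y hy h
    rw [Finset.mem_coe, Finset.mem_range] at hx hy
    exact hinj x (by omega) y (by omega) h
  have hcardA : A.card = l + r + 1 := by
    rw [hA, Finset.card_image_of_injOn hinj1, Finset.card_range]
  have hAsubJ : ∀ y ∈ A, y ∈ J := by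
    intro y hy
    rw [hA, Finset.mem_image] at hy
    obtain ⟨j, hj, rfl⟩ := hy
    rw [Finset.mem_range] at hj
    exact hAJ j (by omega)
  have hfilter : A.filter (fun x => x + 1 ∈ A) = (Finset.range (l + r)).image (arcm s l) := by
    ext x
    constructor
    · intro hx
      have hxA := (Finset.mem_filter.mp hx).1
      have hx1 := (Finset.mem_filter.mp hx).2
      obtain ⟨j, hj, hje⟩ := Finset.mem_image.mp hxA
      rw [Finset.mem_range] at hj
      refine Finset.mem_image.mpr ⟨j, ?_, hje⟩
      rw [Finset.mem_range]
      by_contra hj'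
      have hjlr : j = l + r := by omega
      apply hr1
      have he : s + ((r + 1 : ℕ) : ZMod N) = x + 1 := by
        rw [← hje, hjlr, arcm]
        push_cast
        ring
      rw [he]
      exact hAsubJ _ hx1
    · intro hx
      obtain ⟨j, hj, hje⟩ := Finset.mem_image.mp hx
      rw [Finset.mem_range] at hj
      refine Finset.mem_filter.mpr ⟨Finset.mem_image.mpr ⟨j, Finset.mem_range.mpr (by omega), hje⟩,
        Finset.mem_image.mpr ⟨j + 1, Finset.mem_range.mpr (by omega), ?_⟩⟩
      rw [← hje, arcm, arcm]
      push_cast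
      ring
  rw [hAeq, hcardA, hfilter, Finset.card_image_of_injOn hinj2, Finset.card_range]

lemma cnt_edges (J : Finset (ZMod N)) :
    cnt (fun s : ZMod N => s ∈ J ∧ s + 1 ∈ J) = (J.filter (fun x => x + 1 ∈ J)).card := by
  classical
  rw [cnt]
  apply Finset.card_bij (fun a _ => a)
  · intro a ha
    simp only [Finset.mem_filter] at ha ⊢
    exact ⟨ha.2.1, ha.2.2⟩
  · intro a _ a' _ h
    exact h
  · intro b hb
    simp only [Finset.mem_filter] at hb ⊢
    exact ⟨b, ⟨Finset.mem_univ _, hb.1, hb.2⟩, rfl⟩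

lemma even_c0card (hN3 : 3 ≤ N) {J : Finset (ZMod N)} (hJ : J ≠ Finset.univ)
    (hev : Even ((J.filter (fun x => x + 1 ∈ J)).card)) : Even (c0card (cadj N) J) := by
  classical
  have hmem : ∀ C ∈ comps (cadj N) J, ∃ u ∈ J, compOf (cadj N) J u = C := by
    intro C hC
    simp only [comps, Finset.mem_image] at hC
    exact hC
  have hCview : ∀ C ∈ comps (cadj N) J, ∀ x ∈ C, compOf (cadj N) J x = C := by
    intro C hC x hx
    obtain ⟨u, hu, rfl⟩ := hmem C hC
    exact compOf_congr hx
  have hCsubJ : ∀ C ∈ comps (cadj N) J, C ⊆ J := by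
    intro C hC x hx
    obtain ⟨u, hu, hCu⟩ := hmem C hC
    rw [← hCu] at hx
    exact (mem_compOf.mp hx).1
  have hdisj : ∀ C ∈ comps (cadj N) J, ∀ C' ∈ comps (cadj N) J, C ≠ C' → Disjoint C C' := by
    intro C hC C' hC' hne
    rw [Finset.disjoint_left]
    intro x hx hx'
    exact hne ((hCview C hC x hx).symm.trans (hCview C' hC' x hx'))
  have hcards : ∀ C ∈ comps (cadj N) J, C.card = (C.filter (fun x => x + 1 ∈ C)).card + 1 := by
    intro C hC
    obtain ⟨u, hu, rfl⟩ := hmem C hC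
    exact comp_card hN3 hJ hu
  have hloc : J.filter (fun x => x + 1 ∈ J)
      = (comps (cadj N) J).biUnion (fun C => C.filter (fun x => x + 1 ∈ C)) := by
    ext x
    rw [Finset.mem_filter, Finset.mem_biUnion]
    constructor
    · rintro ⟨hx, hx1⟩
      refine ⟨compOf (cadj N) J x, ?_, ?_⟩
      · simp only [comps, Finset.mem_image]
        exact ⟨x, hx, rfl⟩
      · rw [Finset.mem_filter]
        constructor
        · exact mem_compOf.mpr ⟨hx, Relation.ReflTransGen.refl⟩
        · exact mem_compOf.mpr ⟨hx1, Relation.ReflTransGen.single ⟨hx, hx1, Or.inl rfl⟩⟩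
    · rintro ⟨C, hC, hxC⟩
      rw [Finset.mem_filter] at hxC
      exact ⟨hCsubJ C hC hxC.1, hCsubJ C hC hxC.2⟩
  have hsum : (J.filter (fun x => x + 1 ∈ J)).card
      = ∑ C ∈ comps (cadj N) J, (C.filter (fun x => x + 1 ∈ C)).card := by
    rw [hloc]
    apply Finset.card_biUnion
    intro C hC C' hC' hne
    exact (hdisj C hC C' hC' hne).mono (Finset.filter_subset _ _) (Finset.filter_subset _ _)
  have hc0 : c0card (cadj N) J
      = ((comps (cadj N) J).filter
          (fun C => Odd ((C.filter (fun x => x + 1 ∈ C)).card))).card := by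
    unfold c0card
    congr 1
    apply Finset.filter_congr
    intro C hC
    rw [hcards C hC, Nat.even_add_one]
    exact Nat.not_even_iff_odd
  rw [hc0]
  have hevsum : Even (∑ C ∈ comps (cadj N) J, (C.filter (fun x => x + 1 ∈ C)).card) := by
    rw [← hsum]
    exact hev
  exact (Finset.even_sum_iff_even_card_odd _).mp hevsum

lemma vc_add_self (v : Vc N) : v + v = 0 := by
  funext s
  exact zmod2_add_self (v s)

lemma mem_LB {B : Finset (Finset (ZMod N))} {v : Vc N} (hv : v ∈ LB (eVec N) B) :
    ∃ T : Finset (Finset (ZMod N)), T ⊆ B ∧ v = ∑ I ∈ T, eSum (eVec N) I := by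
  classical
  induction hv using Submodule.span_induction with
  | mem x hx =>
    obtain ⟨I, hI, rfl⟩ := hx
    exact ⟨{I}, by simpa using hI, by simp⟩
  | zero => exact ⟨∅, Finset.empty_subset _, by simp⟩
  | add x y hx hy ihx ihy =>
    obtain ⟨T1, hT1, rfl⟩ := ihx
    obtain ⟨T2, hT2, rfl⟩ := ihy
    refine ⟨(T1 \ T2) ∪ (T2 \ T1), ?_, ?_⟩
    · intro I hI
      rcases Finset.mem_union.mp hI with h | h
      · exact hT1 (Finset.mem_sdiff.mp h).1
      · exact hT2 (Finset.mem_sdiff.mp h).1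
    · rw [Finset.sum_union disjoint_sdiff_sdiff,
        ← Finset.sum_inter_add_sum_sdiff T1 T2 (fun I => eSum (eVec N) I),
        ← Finset.sum_inter_add_sum_sdiff T2 T1 (fun I => eSum (eVec N) I),
        Finset.inter_comm T2 T1, add_add_add_comm, vc_add_self, zero_add]
  | smul a x hx ihx =>
    obtain ⟨T, hT, rfl⟩ := ihx
    rcases zmod2_cases a with rfl | rfl
    · exact ⟨∅, Finset.empty_subset _, by simp⟩
    · exact ⟨T, hT, by simp⟩

lemma part1 (hN3 : 3 ≤ N) (hodd : Odd N) {B : Finset (Finset (ZMod N))}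
    (hB : B ∈ phiSet (cadj N)) {v : Vc N} (hv : v ∈ LB (eVec N) B) : v ∈ V0set N := by
  classical
  obtain ⟨T, hT, rfl⟩ := mem_LB hv
  have hQ : Qf N (∑ I ∈ T, eSum (eVec N) I) = 0 := Qf_span hN3 hB T hT
  set w := ∑ I ∈ T, eSum (eVec N) I with hw
  set J : Finset (ZMod N) := Finset.univ.filter (fun s => w s = 1) with hJdef
  have hwJ : w = eSum (eVec N) J := by
    funext s
    rw [eSum_apply]
    by_cases h : w s = 1
    · rw [if_pos (show s ∈ J from Finset.mem_filter.mpr ⟨Finset.mem_univ _, h⟩), h]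
    · rw [if_neg (fun hm => h (Finset.mem_filter.mp
        (show s ∈ Finset.univ.filter (fun s => w s = 1) from hm)).2)]
      rcases zmod2_cases (w s) with h0 | h1
      · exact h0
      · exact absurd h1 h
  have hJuniv : J ≠ Finset.univ := by
    intro h
    have hQ2 : Qf N (eSum (eVec N) (Finset.univ : Finset (ZMod N))) = 0 := by
      rw [← h, ← hwJ]; exact hQ
    have hN1 : Qf N (eSum (eVec N) (Finset.univ : Finset (ZMod N))) = ((N : ℕ) : ZMod 2) := by
      rw [Qf]
      have h1 : ∀ s : ZMod N, eSum (eVec N) Finset.univ s = 1 := fun s => by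
        rw [eSum_apply, if_pos (Finset.mem_univ _)]
      calc ∑ s : ZMod N, eSum (eVec N) Finset.univ s * eSum (eVec N) Finset.univ (s + 1)
          = ∑ _s : ZMod N, (1 : ZMod 2) :=
            Finset.sum_congr rfl (fun s _ => by rw [h1, h1, one_mul])
        _ = (Fintype.card (ZMod N) : ZMod 2) := by
            rw [Finset.sum_const, Finset.card_univ, nsmul_eq_mul, mul_one]
        _ = ((N : ℕ) : ZMod 2) := by rw [ZMod.card]
    rw [hN1, natCast_zmod2_eq_zero_iff, Nat.even_iff] at hQ2
    rw [Nat.odd_iff] at hodd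
    omega
  have hEv : Even (c0card (cadj N) J) := by
    apply even_c0card hN3 hJuniv
    have h2 := hQ
    rw [hwJ, Qf_eSum, natCast_zmod2_eq_zero_iff, cnt_edges] at h2
    exact h2
  exact ⟨J, hJuniv, hEv, hwJ⟩

end S7

/-- for `B ∈ phi(Vbar)`: `M_B ⊆ V_0`, `e_S ∉ M_B`, and
`pi⁻¹(L_B) = M_B ⊕ F·e_S` (internal direct sum). -/
theorem statement7 (N : ℕ) [NeZero N] (hN : 3 ≤ N) (hodd : Odd N)
    (B : Finset (Finset (ZMod N))) (hB : B ∈ phiSet (cadj N)) :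
    ((LB (eVec N) B : Submodule (ZMod 2) (Vc N)) : Set (Vc N)) ⊆ V0set N ∧
    eSum (eVec N) Finset.univ ∉ LB (eVec N) B ∧
    Submodule.comap (piQ N) (LB (ebar N) B) = LB (eVec N) B ⊔ radN N ∧
    Disjoint (LB (eVec N) B) (radN N) := by
  have hsub : ∀ v ∈ LB (eVec N) B, v ∈ V0set N := fun v hv => S7.part1 hN hodd hB hv
  have hnot : eSum (eVec N) Finset.univ ∉ LB (eVec N) B := by
    intro h
    obtain ⟨I, hI, -, hEq⟩ := hsub _ h
    exact hI (S7.eSum_inj hEq).symm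
  refine ⟨fun v hv => hsub v hv, hnot, ?_, ?_⟩
  · have hmap : LB (ebar N) B = Submodule.map (piQ N) (LB (eVec N) B) := by
      rw [LB, LB, Submodule.map_span]
      congr 1
      rw [← Set.image_comp]
      apply Set.image_congr
      intro I _
      show eSum (ebar N) I = piQ N (eSum (eVec N) I)
      rw [eSum, eSum, map_sum]
      rfl
    rw [hmap, Submodule.comap_map_eq]
    congr 1
    exact Submodule.ker_mkQ (radN N)
  · rw [Submodule.disjoint_def]
    intro x hx hrad
    rw [radN, Submodule.mem_span_singleton] at hrad
    obtain ⟨a, ha⟩ := hrad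
    rcases S7.zmod2_cases a with rfl | rfl
    · rw [zero_smul] at ha
      exact ha.symm
    · rw [one_smul] at ha
      rw [← ha] at hx
      exact absurd hx hnot
end

section
/- Let N ≥ 3 be odd and let (S,E) be the cycle of length N. Let B in phi with B ≠ ∅. Then at least one connected component of the induced subgraph of (S,E) on S∖supp(B) has even cardinality; in particular there exist s, s' in S with {s,s'} in E and supp(B) ∩ {s,s'} = ∅. -/
section Statement9Aux

open Finset

variable {S : Type} [DecidableEq S]

private lemma reach_mono9 {adj : S → S → Prop} {I J : Finset S} (hIJ : I ⊆ J) {s t : S}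
    (h : Relation.ReflTransGen (fun a b => a ∈ I ∧ b ∈ I ∧ adj a b) s t) :
    Relation.ReflTransGen (fun a b => a ∈ J ∧ b ∈ J ∧ adj a b) s t := by
  induction h with
  | refl => exact .refl
  | tail _ h2 ih => exact ih.tail ⟨hIJ h2.1, hIJ h2.2.1, h2.2.2⟩

private lemma reach_symm9 {adj : S → S → Prop} (hsym : ∀ a b, adj a b → adj b a)
    {I : Finset S} {s t : S}
    (h : Relation.ReflTransGen (fun a b => a ∈ I ∧ b ∈ I ∧ adj a b) s t) :
    Relation.ReflTransGen (fun a b => a ∈ I ∧ b ∈ I ∧ adj a b) t s := by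
  induction h with
  | refl => exact .refl
  | tail _ h2 ih => exact Relation.ReflTransGen.head ⟨h2.2.1, h2.1, hsym _ _ h2.2.2⟩ ih

private lemma mem_compOf_iff9 {adj : S → S → Prop} {I : Finset S} {s t : S} :
    t ∈ compOf adj I s ↔
      t ∈ I ∧ Relation.ReflTransGen (fun a b => a ∈ I ∧ b ∈ I ∧ adj a b) s t := by
  unfold compOf
  simp only [Finset.mem_filter]

private lemma mem_compOf_self9 {adj : S → S → Prop} {I : Finset S} {s : S} (hs : s ∈ I) :
    s ∈ compOf adj I s := mem_compOf_iff9.2 ⟨hs, .refl⟩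

private lemma compOf_subset9 {adj : S → S → Prop} {I : Finset S} {s : S} :
    compOf adj I s ⊆ I := fun x hx => (mem_compOf_iff9.1 hx).1

private lemma compOf_eq_of_mem9 {adj : S → S → Prop} (hsym : ∀ a b, adj a b → adj b a)
    {I : Finset S} {s t : S} (ht : t ∈ compOf adj I s) :
    compOf adj I t = compOf adj I s := by
  obtain ⟨htI, hst⟩ := mem_compOf_iff9.1 ht
  ext u
  simp only [mem_compOf_iff9]
  constructor
  · rintro ⟨hu, h⟩; exact ⟨hu, hst.trans h⟩
  · rintro ⟨hu, h⟩; exact ⟨hu, (reach_symm9 hsym hst).trans h⟩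

private lemma adj_mem_compOf9 {adj : S → S → Prop} {I : Finset S} {s a b : S}
    (ha : a ∈ compOf adj I s) (hb : b ∈ I) (hadj : adj a b) : b ∈ compOf adj I s := by
  obtain ⟨haI, hsa⟩ := mem_compOf_iff9.1 ha
  exact mem_compOf_iff9.2 ⟨hb, hsa.tail ⟨haI, hb, hadj⟩⟩

private lemma mem_comps_iff9 {adj : S → S → Prop} {I : Finset S} {C : Finset S} :
    C ∈ comps adj I ↔ ∃ s ∈ I, compOf adj I s = C := by
  simp [comps]

private lemma comps_disj9 {adj : S → S → Prop} (hsym : ∀ a b, adj a b → adj b a)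
    {I : Finset S} {C C' : Finset S}
    (hC : C ∈ comps adj I) (hC' : C' ∈ comps adj I) (hne : C ≠ C') : Disjoint C C' := by
  obtain ⟨s, hs, rfl⟩ := mem_comps_iff9.1 hC
  obtain ⟨s', hs', rfl⟩ := mem_comps_iff9.1 hC'
  rw [Finset.disjoint_left]
  intro u hu hu'
  exact hne ((compOf_eq_of_mem9 hsym hu).symm.trans (compOf_eq_of_mem9 hsym hu'))

private lemma comps_biUnion9 {adj : S → S → Prop} {I : Finset S} :
    (comps adj I).biUnion id = I := by
  apply Finset.Subset.antisymm
  · intro t ht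
    simp only [Finset.mem_biUnion, id] at ht
    obtain ⟨C, hC, htC⟩ := ht
    obtain ⟨s, hs, rfl⟩ := mem_comps_iff9.1 hC
    exact compOf_subset9 htC
  · intro s hs
    exact Finset.mem_biUnion.2
      ⟨compOf adj I s, mem_comps_iff9.2 ⟨s, hs, rfl⟩, mem_compOf_self9 hs⟩

private lemma card_eq_sum_comps9 {adj : S → S → Prop} (hsym : ∀ a b, adj a b → adj b a)
    (I : Finset S) : I.card = ∑ C ∈ comps adj I, C.card := by
  conv_lhs => rw [← comps_biUnion9 (adj := adj) (I := I)]
  exact Finset.card_biUnion (fun C hC C' hC' h => comps_disj9 hsym hC hC' h)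

private lemma card_mod_two9 {adj : S → S → Prop} (hsym : ∀ a b, adj a b → adj b a)
    {I : Finset S} (h : ∀ C ∈ comps adj I, Odd C.card) :
    I.card % 2 = (comps adj I).card % 2 := by
  rw [card_eq_sum_comps9 hsym, Finset.sum_nat_mod]
  have h1 : ∑ C ∈ comps adj I, C.card % 2 = (comps adj I).card := by
    rw [Finset.sum_congr rfl (fun C hC => Nat.odd_iff.1 (h C hC))]
    simp
  rw [h1]

private lemma isPathOn_connOn9 {adj : S → S → Prop} {I : Finset S} (h : IsPathOn adj I) :
    ConnOn adj I := by
  obtain ⟨m, f, hinj, hI, hadj⟩ := h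
  have hmem : ∀ i : Fin (m + 1), f i ∈ I := by
    intro i; rw [hI]; exact Finset.mem_image_of_mem f (Finset.mem_univ i)
  have up : ∀ v (hv : v < m + 1),
      Relation.ReflTransGen (fun a b => a ∈ I ∧ b ∈ I ∧ adj a b)
        (f ⟨0, Nat.succ_pos m⟩) (f ⟨v, hv⟩) := by
    intro v hv
    induction v with
    | zero => exact .refl
    | succ n ih =>
        refine (ih (Nat.lt_of_succ_lt hv)).tail ⟨hmem _, hmem _, ?_⟩
        rw [hadj]; left; simp
  have down : ∀ v (hv : v < m + 1),
      Relation.ReflTransGen (fun a b => a ∈ I ∧ b ∈ I ∧ adj a b)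
        (f ⟨v, hv⟩) (f ⟨0, Nat.succ_pos m⟩) := by
    intro v hv
    induction v with
    | zero => exact .refl
    | succ n ih =>
        refine Relation.ReflTransGen.head ⟨hmem _, hmem _, ?_⟩ (ih (Nat.lt_of_succ_lt hv))
        rw [hadj]; right; simp
  intro s hs t ht
  rw [hI] at hs ht
  obtain ⟨i, _, rfl⟩ := Finset.mem_image.1 hs
  obtain ⟨j, _, rfl⟩ := Finset.mem_image.1 ht
  have h1 := down i.1 i.2
  have h2 := up j.1 j.2
  simp only [Fin.eta] at h1 h2
  exact h1.trans h2

private lemma connOn_union9 {adj : S → S → Prop} (hsym : ∀ a b, adj a b → adj b a)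
    {M M' : Finset S} (hM : ConnOn adj M) (hM' : ConnOn adj M') {a b : S}
    (ha : a ∈ M) (hb : b ∈ M') (hab : adj a b) : ConnOn adj (M ∪ M') := by
  have hMu : M ⊆ M ∪ M' := Finset.subset_union_left
  have hM'u : M' ⊆ M ∪ M' := Finset.subset_union_right
  have key : ∀ s ∈ M ∪ M',
      Relation.ReflTransGen (fun x y => x ∈ M ∪ M' ∧ y ∈ M ∪ M' ∧ adj x y) a s := by
    intro s hs
    rcases Finset.mem_union.1 hs with h | h
    · exact reach_mono9 hMu (hM a ha s h)
    · exact (Relation.ReflTransGen.single ⟨hMu ha, hM'u hb, hab⟩).trans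
        (reach_mono9 hM'u (hM' b hb s h))
  intro s hs t ht
  exact (reach_symm9 hsym (key s hs)).trans (key t ht)

private lemma exists_max9 {B : Finset (Finset S)} {I : Finset S} (hI : I ∈ B) :
    ∃ M ∈ B, I ⊆ M ∧ ∀ I' ∈ B, ¬ M ⊂ I' := by
  classical
  obtain ⟨M, hM, hmax⟩ := Set.Finite.exists_maximalFor id
    (↑(B.filter (fun J => I ⊆ J)) : Set (Finset S)) (Finset.finite_toSet _)
    ⟨I, by simp [hI]⟩
  simp only [Finset.coe_filter, Set.mem_setOf_eq, id] at hM hmax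
  refine ⟨M, hM.1, hM.2, ?_⟩
  intro I' hI' hcon
  exact hcon.ne (Finset.Subset.antisymm hcon.subset (hmax ⟨hI', hM.2.trans hcon.subset⟩ hcon.subset))

private lemma comp_of_supp9 {adj : S → S → Prop} (hsym : ∀ a b, adj a b → adj b a)
    {B : Finset (Finset S)} (hB : B ∈ phiSet adj) {s : S} (hs : s ∈ suppB B) :
    ∃ M ∈ B, compOf adj (suppB B) s = M := by
  obtain ⟨hcal, hP0, _⟩ := hB
  simp only [suppB, Finset.mem_biUnion, id] at hs
  obtain ⟨I, hI, hsI⟩ := hs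
  obtain ⟨M, hM, hIM, hmax⟩ := exists_max9 hI
  have hsM : s ∈ M := hIM hsI
  have hMs : M ⊆ suppB B := fun t ht => Finset.mem_biUnion.2 ⟨M, hM, ht⟩
  have hconnM : ConnOn adj M := isPathOn_connOn9 (hcal M hM).1
  have h1 : M ⊆ compOf adj (suppB B) s := by
    intro t ht
    exact mem_compOf_iff9.2 ⟨hMs ht, reach_mono9 hMs (hconnM s hsM t ht)⟩
  have hclose : ∀ a ∈ M, ∀ b ∈ suppB B, adj a b → b ∈ M := by
    intro a haM b hbT hab
    obtain ⟨I', hI', hbI'⟩ := Finset.mem_biUnion.1 hbT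
    obtain ⟨M', hM', hIM', hmax'⟩ := exists_max9 hI'
    have hbM' : b ∈ M' := hIM' hbI'
    rcases hP0 M hM M' hM' with heq | hsp | hp | hp
    · exact heq ▸ hbM'
    · exact absurd (connOn_union9 hsym hconnM (isPathOn_connOn9 (hcal M' hM').1)
        haM hbM' hab) hsp.2
    · exact absurd hp.1 (hmax M' hM')
    · exact hp.1.subset hbM'
  have h2 : compOf adj (suppB B) s ⊆ M := by
    intro t ht
    obtain ⟨htT, hreach⟩ := mem_compOf_iff9.1 ht
    clear ht htT
    induction hreach with
    | refl => exact hsM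
    | tail _ h2 ih => exact hclose _ ih _ h2.2.1 h2.2.2
  exact ⟨M, hM, Finset.Subset.antisymm h2 h1⟩

private lemma cadj_symm9 (N : ℕ) : ∀ a b : ZMod N, cadj N a b → cadj N b a := by
  intro a b h
  rcases h with h | h
  · exact Or.inr h
  · exact Or.inl h

private lemma closed_eq_univ9 {N : ℕ} [NeZero N] {C : Finset (ZMod N)} (hne : C.Nonempty)
    (hcl : ∀ a ∈ C, a + 1 ∈ C) : C = Finset.univ := by
  obtain ⟨s, hs⟩ := hne
  have key : ∀ k : ℕ, s + (k : ZMod N) ∈ C := by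
    intro k
    induction k with
    | zero => simpa using hs
    | succ n ih =>
        have h := hcl _ ih
        have he : s + ((n + 1 : ℕ) : ZMod N) = s + (n : ZMod N) + 1 := by push_cast; ring
        rw [he]; exact h
  apply Finset.eq_univ_of_forall
  intro t
  have h := key (t - s).val
  rwa [ZMod.natCast_rightInverse (t - s), show s + (t - s) = t from by ring] at h

private lemma not_path_univ9 {N : ℕ} [NeZero N] (hN : 3 ≤ N) :
    ¬ IsPathOn (cadj N) (Finset.univ : Finset (ZMod N)) := by
  rintro ⟨m, f, hinj, hI, hadj⟩
  have himg : ∀ x : ZMod N, ∃ j : Fin (m + 1), f j = x := by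
    intro x
    have : x ∈ Finset.image f Finset.univ := by rw [← hI]; exact Finset.mem_univ _
    simpa using this
  obtain ⟨j, hj⟩ := himg (f 0 + 1)
  obtain ⟨j', hj'⟩ := himg (f 0 - 1)
  have hj1 : (j : ℕ) = 1 := by
    have hc : cadj N (f 0) (f j) := by rw [hj]; exact Or.inl rfl
    have h := (hadj 0 j).1 hc
    simp only [Fin.val_zero] at h
    omega
  have hj'1 : (j' : ℕ) = 1 := by
    have hc : cadj N (f 0) (f j') := by rw [hj']; exact Or.inr (by ring)
    have h := (hadj 0 j').1 hc
    simp only [Fin.val_zero] at h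
    omega
  have hjj : j = j' := Fin.ext (by omega)
  have heq : f 0 + 1 = f 0 - 1 := by rw [← hj, hjj, hj']
  have h2 : ((2 : ℕ) : ZMod N) = 0 := by push_cast; linear_combination heq
  have hdvd : N ∣ 2 := (ZMod.natCast_eq_zero_iff 2 N).1 h2
  have := Nat.le_of_dvd (by norm_num) hdvd
  omega

private lemma card_ends_eq9 {N : ℕ} [NeZero N] (T : Finset (ZMod N)) :
    (T.filter (fun s => s + 1 ∉ T)).card
      = ((Finset.univ \ T).filter (fun s => s + 1 ∈ T)).card := by
  classical
  have h1 : (T.filter (fun s => s + 1 ∈ T)).card + (T.filter (fun s => s + 1 ∉ T)).card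
      = T.card :=
    Finset.card_filter_add_card_filter_not (p := fun s => s + 1 ∈ T)
  have h2 : ((Finset.univ.filter (fun s : ZMod N => s + 1 ∈ T)).filter (fun s => s ∈ T)).card
      + ((Finset.univ.filter (fun s : ZMod N => s + 1 ∈ T)).filter (fun s => s ∉ T)).card
      = (Finset.univ.filter (fun s : ZMod N => s + 1 ∈ T)).card :=
    Finset.card_filter_add_card_filter_not (p := fun s => s ∈ T)
  have h3 : (Finset.univ.filter (fun s : ZMod N => s + 1 ∈ T)).card = T.card := by
    apply Finset.card_bij (fun s _ => s + 1)
    · intro a ha; exact (Finset.mem_filter.1 ha).2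
    · intro a _ b _ h; exact add_right_cancel h
    · intro t ht
      refine ⟨t - 1, Finset.mem_filter.2 ⟨Finset.mem_univ _, ?_⟩, by ring⟩
      rw [show t - 1 + 1 = t from by ring]; exact ht
  have h4 : (Finset.univ.filter (fun s : ZMod N => s + 1 ∈ T)).filter (fun s => s ∈ T)
      = T.filter (fun s => s + 1 ∈ T) := by
    ext x; simp [and_comm]
  have h5 : (Finset.univ.filter (fun s : ZMod N => s + 1 ∈ T)).filter (fun s => s ∉ T)
      = (Finset.univ \ T).filter (fun s => s + 1 ∈ T) := by
    ext x; simp [and_comm]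
  rw [h4, h5, h3] at h2
  omega

private lemma ends_inj9 {N : ℕ} [NeZero N] {T : Finset (ZMod N)} (hTu : T ≠ Finset.univ)
    {s s' : ZMod N} (hs : s ∈ T) (hs1 : s + 1 ∉ T) (hs' : s' ∈ T) (hs1' : s' + 1 ∉ T)
    (heq : compOf (cadj N) T s' = compOf (cadj N) T s) : s' = s := by
  classical
  set C := compOf (cadj N) T s with hC
  have hsC : s ∈ C := mem_compOf_self9 hs
  have hs'C : s' ∈ C := heq ▸ mem_compOf_self9 hs'
  have hCT : C ⊆ T := compOf_subset9
  have hCu : C ≠ Finset.univ := by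
    intro h
    exact hTu (Finset.univ_subset_iff.1 (h ▸ hCT))
  have hex : ∃ k : ℕ, 0 < k ∧ s - (k : ZMod N) ∉ C := by
    obtain ⟨t, ht⟩ : ∃ t, t ∉ C := by
      by_contra h; push_neg at h; exact hCu (Finset.eq_univ_of_forall h)
    refine ⟨(s - t).val, ?_, ?_⟩
    · have hne : s - t ≠ 0 := sub_ne_zero.2 (fun h => ht (h ▸ hsC))
      exact Nat.pos_of_ne_zero (fun h0 => hne ((ZMod.val_eq_zero _).1 h0))
    · rw [ZMod.natCast_rightInverse (s - t), show s - (s - t) = t from by ring]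
      exact ht
  set j := Nat.find hex with hjdef
  have hj := Nat.find_spec hex
  have hmem_small : ∀ k, k < j → s - (k : ZMod N) ∈ C := by
    intro k hk
    rcases Nat.eq_zero_or_pos k with rfl | hk0
    · simpa using hsC
    · by_contra h
      exact Nat.find_min hex hk ⟨hk0, h⟩
  have hCA : ∀ t ∈ C, ∃ k, k < j ∧ t = s - (k : ZMod N) := by
    intro t htC
    obtain ⟨htT, hreach⟩ := mem_compOf_iff9.1 htC
    clear htC htT
    induction hreach with
    | refl => exact ⟨0, hj.1, by simp⟩
    | @tail a b hsa hstep ih =>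
        obtain ⟨k, hk, hak⟩ := ih
        have hbC : b ∈ C := mem_compOf_iff9.2 ⟨hstep.2.1, hsa.tail hstep⟩
        rcases hstep.2.2 with hb | hb
        · rcases Nat.eq_zero_or_pos k with rfl | hk0
          · exfalso
            apply hs1
            have : b = s + 1 := by rw [hb, hak]; push_cast; ring
            rw [← this]; exact hstep.2.1
          · obtain ⟨k', rfl⟩ := Nat.exists_eq_succ_of_ne_zero (Nat.pos_iff_ne_zero.1 hk0)
            refine ⟨k', by omega, ?_⟩
            rw [hb, hak]; push_cast; ring
        · have hb' : b = s - ((k + 1 : ℕ) : ZMod N) := by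
            rw [hak] at hb
            push_cast
            linear_combination -hb
          rcases Nat.lt_or_ge (k + 1) j with h | h
          · exact ⟨k + 1, h, hb'⟩
          · exfalso
            have hkj : k + 1 = j := by omega
            rw [hb', hkj] at hbC
            exact hj.2 hbC
  obtain ⟨k, hk, hks⟩ := hCA s' hs'C
  rcases Nat.eq_zero_or_pos k with rfl | hk0
  · rw [hks]; simp
  · exfalso
    obtain ⟨k', rfl⟩ := Nat.exists_eq_succ_of_ne_zero (Nat.pos_iff_ne_zero.1 hk0)
    apply hs1'
    have he : s' + 1 = s - (k' : ZMod N) := by rw [hks]; push_cast; ring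
    rw [he]
    exact hCT (hmem_small k' (by omega))

private lemma card_comps9 {N : ℕ} [NeZero N] {T : Finset (ZMod N)}
    (hTu : T ≠ Finset.univ) :
    (comps (cadj N) T).card = (T.filter (fun s => s + 1 ∉ T)).card := by
  classical
  symm
  apply Finset.card_bij (fun s _ => compOf (cadj N) T s)
  · intro s hsf
    exact mem_comps_iff9.2 ⟨s, (Finset.mem_filter.1 hsf).1, rfl⟩
  · intro a ha b hb h
    obtain ⟨haT, ha1⟩ := Finset.mem_filter.1 ha
    obtain ⟨hbT, hb1⟩ := Finset.mem_filter.1 hb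
    exact ends_inj9 hTu hbT hb1 haT ha1 h
  · intro C hCm
    obtain ⟨s0, hs0, rfl⟩ := mem_comps_iff9.1 hCm
    by_cases hex : ∃ s ∈ compOf (cadj N) T s0, s + 1 ∉ T
    · obtain ⟨s, hsC, hs1⟩ := hex
      exact ⟨s, Finset.mem_filter.2 ⟨compOf_subset9 hsC, hs1⟩,
        compOf_eq_of_mem9 (cadj_symm9 N) hsC⟩
    · push_neg at hex
      exfalso
      apply hTu
      have hCuniv : compOf (cadj N) T s0 = Finset.univ :=
        closed_eq_univ9 ⟨s0, mem_compOf_self9 hs0⟩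
          (fun a ha => adj_mem_compOf9 ha (hex a ha) (Or.inl rfl))
      exact Finset.univ_subset_iff.1 (hCuniv ▸ compOf_subset9 (s := s0))

end Statement9Aux


/-- for `∅ ≠ B ∈ phi`, some connected component of `S ∖ supp(B)` has even
cardinality; in particular there is an edge `{s,s'}` disjoint from `supp(B)`. -/
theorem statement9 (N : ℕ) [NeZero N] (hN : 3 ≤ N) (hodd : Odd N)
    (B : Finset (Finset (ZMod N))) (hB : B ∈ phiSet (cadj N)) (hne : B ≠ ∅) :
    (∃ C ∈ comps (cadj N) (Finset.univ \ suppB B), Even C.card) ∧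
    (∃ s s' : ZMod N, cadj N s s' ∧ s ∉ suppB B ∧ s' ∉ suppB B) := by
  classical
  have hsym := cadj_symm9 N
  set T : Finset (ZMod N) := suppB B with hTdef
  have hTne : T.Nonempty := by
    obtain ⟨I, hI⟩ := Finset.nonempty_iff_ne_empty.2 hne
    have hodd' : Odd I.card := (hB.1 I hI).2
    have hIne : I.Nonempty := Finset.card_pos.1 (by rcases hodd' with ⟨m, hm⟩; omega)
    obtain ⟨x, hx⟩ := hIne
    exact ⟨x, Finset.mem_biUnion.2 ⟨I, hI, hx⟩⟩
  have hToddcomps : ∀ C ∈ comps (cadj N) T, Odd C.card := by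
    intro C hC
    obtain ⟨s, hsT, rfl⟩ := mem_comps_iff9.1 hC
    obtain ⟨M, hM, hMeq⟩ := comp_of_supp9 hsym hB hsT
    rw [hMeq]
    exact (hB.1 M hM).2
  have hTu : T ≠ Finset.univ := by
    intro hT
    obtain ⟨s, hsT⟩ := hTne
    obtain ⟨M, hM, hMeq⟩ := comp_of_supp9 hsym hB hsT
    have hsM : s ∈ M := hMeq ▸ mem_compOf_self9 hsT
    have hMuniv : M = Finset.univ := by
      apply closed_eq_univ9 ⟨s, hsM⟩
      intro a haM
      have h1 : a + 1 ∈ compOf (cadj N) T s :=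
        adj_mem_compOf9 (hMeq ▸ haM) (by rw [hT]; exact Finset.mem_univ _) (Or.inl rfl)
      exact hMeq ▸ h1
    exact not_path_univ9 hN (hMuniv ▸ (hB.1 M hM).1)
  set T' : Finset (ZMod N) := Finset.univ \ T with hT'def
  have hT'ne : T'.Nonempty :=
    Finset.sdiff_nonempty.2 (fun h => hTu (Finset.univ_subset_iff.1 h))
  have hT'u : T' ≠ Finset.univ := by
    intro h
    obtain ⟨x, hx⟩ := hTne
    have hx' : x ∈ T' := h ▸ Finset.mem_univ x
    exact (Finset.mem_sdiff.1 hx').2 hx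
  have part1 : ∃ C ∈ comps (cadj N) T', Even C.card := by
    by_contra hcon
    push_neg at hcon
    have hT'odd : ∀ C ∈ comps (cadj N) T', Odd C.card :=
      fun C hC => (Nat.even_or_odd C.card).resolve_left (hcon C hC)
    have e1 := card_mod_two9 hsym hToddcomps
    have e2 := card_mod_two9 hsym hT'odd
    have e3 := card_comps9 (T := T) hTu
    have e4 := card_comps9 (T := T') hT'u
    have e5 := card_ends_eq9 T
    have e6 : T'.filter (fun s => s + 1 ∉ T')
        = (Finset.univ \ T).filter (fun s => s + 1 ∈ T) := by
      ext x
      simp only [hT'def, Finset.mem_filter, Finset.mem_sdiff, Finset.mem_univ, true_and]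
      tauto
    have e7 : T.card + T'.card = N := by
      have hsub := Finset.card_le_card (Finset.subset_univ T)
      rw [Finset.card_univ, ZMod.card] at hsub
      rw [hT'def, Finset.card_sdiff_of_subset (Finset.subset_univ T), Finset.card_univ, ZMod.card]
      omega
    have hN2 : N % 2 = 1 := Nat.odd_iff.1 hodd
    rw [e6] at e4
    rw [e5] at e3
    omega
  obtain ⟨C, hC, hCeven⟩ := part1
  refine ⟨⟨C, hC, hCeven⟩, ?_⟩
  obtain ⟨s0, hs0, hCeq⟩ := mem_comps_iff9.1 hC
  have hs0C : s0 ∈ C := hCeq ▸ mem_compOf_self9 hs0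
  have hc2 : 1 < C.card := by
    have hcne : C.card ≠ 0 := Finset.card_ne_zero_of_mem hs0C
    rcases hCeven with ⟨m, hm⟩; omega
  obtain ⟨t, htC, hts⟩ := Finset.exists_mem_ne hc2 s0
  rw [← hCeq] at htC
  obtain ⟨htT', hreach⟩ := mem_compOf_iff9.1 htC
  rcases hreach.cases_head with heq | ⟨c, hstep, _⟩
  · exact absurd heq.symm hts
  · exact ⟨s0, c, hstep.2.2, (Finset.mem_sdiff.1 hstep.1).2, (Finset.mem_sdiff.1 hstep.2.1).2⟩
end
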